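/- arXiv:1011.2244 — 4 statements merged into one kernel-verified Lean document; each statement's English description precedes it below -/
import Mathlib

section
/- The family of new Lax–Oleinik operators is a one-parameter semigroup: for all t, s ≥ 0 and every continuous ℤ^d-periodic function u : ℝ^d → ℝ, T̃^a_{t+s} u = T̃^a_t ( T̃^a_s u ). -/
open Set Filter

noncomputable section

/-- Euclidean space `ℝ^d`. -/
abbrev Ed (d : ℕ) := EuclideanSpace ℝ (Fin d)

/-- The vector in `ℝ^d` with integer coordinates `k`. -/
def intVec (d : ℕ) (k : Fin d → ℤ) : Ed d := WithLp.toLp 2 (fun i => (k i : ℝ))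

/-- `u : ℝ^d → ℝ` is `ℤ^d`-periodic. -/
def IsZdPeriodic {d : ℕ} (u : Ed d → ℝ) : Prop :=
  ∀ (x : Ed d) (k : Fin d → ℤ), u (x + intVec d k) = u x

/-- `γ` is continuous and piecewise `C¹` on `[a, b]`. -/
def PiecewiseC1On {d : ℕ} (γ : ℝ → Ed d) (a b : ℝ) : Prop :=
  ContinuousOn γ (Set.Icc a b) ∧
  ∃ (n : ℕ) (T : Fin (n + 1) → ℝ), T 0 = a ∧ T (Fin.last n) = b ∧ Monotone T ∧
    ∀ i : Fin n, ContDiffOn ℝ 1 γ (Set.Icc (T i.castSucc) (T i.succ))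

/-- The standing hypotheses on the autonomous Tonelli Lagrangian `La`:
`C²` smoothness, `ℤ^d`-periodicity in `x`, positive definiteness of the Hessian
`∂²La/∂v²`, and superlinear growth in `v`. -/
def TonelliAut {d : ℕ} (La : Ed d → Ed d → ℝ) : Prop :=
  ContDiff ℝ 2 (fun p : Ed d × Ed d => La p.1 p.2) ∧
  (∀ (x v : Ed d) (k : Fin d → ℤ), La (x + intVec d k) v = La x v) ∧
  (∀ x v w : Ed d, w ≠ 0 → 0 < iteratedFDeriv ℝ 2 (fun v' => La x v') v ![w, w]) ∧
  (∀ A : ℝ, 0 ≤ A → ∃ B : ℝ, ∀ x v : Ed d, A * ‖v‖ - B ≤ La x v)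

/-- The action of the curve `γ : [a,b] → ℝ^d` for the autonomous Lagrangian `La`. -/
def actionA {d : ℕ} (La : Ed d → Ed d → ℝ) (γ : ℝ → Ed d) (a b : ℝ) : ℝ :=
  ∫ s in a..b, La (γ s) (deriv γ s)

/-- The Lax–Oleinik semigroup `Tᵃ_t u (x)`: `Tᵃ_0 u = u` and, for `t > 0`, the infimum of
`u(γ(0)) + ∫₀^t La(γ,γ') ds` over continuous piecewise `C¹` curves ending at `x`. -/
def LOa {d : ℕ} (La : Ed d → Ed d → ℝ) (u : Ed d → ℝ) (t : ℝ) (x : Ed d) : ℝ :=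
  if t = 0 then u x
  else sInf {r | ∃ γ : ℝ → Ed d, PiecewiseC1On γ 0 t ∧ γ t = x ∧
    r = u (γ 0) + actionA La γ 0 t}

/-- The new Lax–Oleinik operator `T̃ᵃ_t u (x) = inf_{σ ∈ [t,2t]} Tᵃ_σ u (x)`. -/
def LOnew {d : ℕ} (La : Ed d → Ed d → ℝ) (u : Ed d → ℝ) (t : ℝ) (x : Ed d) : ℝ :=
  sInf {r | ∃ σ : ℝ, t ≤ σ ∧ σ ≤ 2 * t ∧ r = LOa La u σ x}

section PC1
variable {d : ℕ}

lemma pc1_le {γ : ℝ → Ed d} {a b : ℝ} (h : PiecewiseC1On γ a b) : a ≤ b := by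
  obtain ⟨-, n, T, h0, hl, hm, -⟩ := h
  rw [← h0, ← hl]; exact hm (Fin.zero_le _)

lemma pc1_const {x : Ed d} {a b : ℝ} (hab : a ≤ b) : PiecewiseC1On (fun _ => x) a b := by
  refine ⟨continuousOn_const, 1, ![a, b], rfl, rfl, ?_, fun i => contDiffOn_const⟩
  intro i j hij
  fin_cases i <;> fin_cases j <;> simp_all <;> omega

lemma pc1_congr {γ γ' : ℝ → Ed d} {a b : ℝ} (h : PiecewiseC1On γ a b)
    (he : ∀ s ∈ Set.Icc a b, γ s = γ' s) : PiecewiseC1On γ' a b := by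
  obtain ⟨hc, n, T, h0, hl, hm, hp⟩ := h
  have hsub : ∀ i : Fin n, Set.Icc (T i.castSucc) (T i.succ) ⊆ Set.Icc a b := by
    intro i s hs
    exact ⟨h0 ▸ le_trans (hm (Fin.zero_le _)) hs.1, hl ▸ le_trans hs.2 (hm (Fin.le_last _))⟩
  exact ⟨hc.congr (fun s hs => (he s hs).symm), n, T, h0, hl, hm,
    fun i => (hp i).congr fun s hs => (he s (hsub i hs)).symm⟩

lemma pc1_shift {γ : ℝ → Ed d} {a b : ℝ} (c : ℝ) (h : PiecewiseC1On γ a b) :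
    PiecewiseC1On (fun s => γ (s + c)) (a - c) (b - c) := by
  obtain ⟨hc', n, T, h0, hl, hm, hp⟩ := h
  refine ⟨?_, n, fun i => T i - c, by dsimp only; rw [h0], by dsimp only; rw [hl],
    fun i j hij => sub_le_sub_right (hm hij) c, ?_⟩
  · have hmap : Set.MapsTo (fun s : ℝ => s + c) (Set.Icc (a - c) (b - c)) (Set.Icc a b) := by
      intro s hs
      simp only [Set.mem_Icc] at hs ⊢
      constructor <;> linarith
    exact hc'.comp ((continuous_add_right c).continuousOn) hmap
  · intro i
    have hmap : Set.MapsTo (fun s : ℝ => s + c)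
        (Set.Icc (T i.castSucc - c) (T i.succ - c)) (Set.Icc (T i.castSucc) (T i.succ)) := by
      intro s hs
      simp only [Set.mem_Icc] at hs ⊢
      constructor <;> linarith
    exact (hp i).comp ((contDiff_id.add contDiff_const).contDiffOn) hmap

lemma pc1_trans {γ : ℝ → Ed d} {a b c : ℝ} (h1 : PiecewiseC1On γ a b)
    (h2 : PiecewiseC1On γ b c) : PiecewiseC1On γ a c := by
  have hab := pc1_le h1; have hbc := pc1_le h2
  obtain ⟨hc1, n1, T1, T10, T1l, T1m, T1p⟩ := h1
  obtain ⟨hc2, n2, T2, T20, T2l, T2m, T2p⟩ := h2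
  refine ⟨?_, n1 + n2,
    fun i => if h : (i : ℕ) ≤ n1 then T1 ⟨i, by omega⟩ else T2 ⟨(i : ℕ) - n1, by omega⟩,
    ?_, ?_, ?_, ?_⟩
  · intro x hx
    have h1' : ContinuousWithinAt γ (Set.Icc a b) x := by
      by_cases hx1 : x ∈ Set.Icc a b
      · exact hc1 x hx1
      · exact continuousWithinAt_of_notMem_closure (by rwa [closure_Icc])
    have h2' : ContinuousWithinAt γ (Set.Icc b c) x := by
      by_cases hx2 : x ∈ Set.Icc b c
      · exact hc2 x hx2
      · exact continuousWithinAt_of_notMem_closure (by rwa [closure_Icc])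
    have := h1'.union h2'
    rw [Set.Icc_union_Icc_eq_Icc hab hbc] at this
    exact this
  · dsimp only
    rw [dif_pos (by simp : ((0 : Fin (n1+n2+1)) : ℕ) ≤ n1), ← T10]; congr 1
  · dsimp only
    by_cases hn2 : n2 = 0
    · subst hn2
      rw [dif_pos (by simp [Fin.val_last] : ((Fin.last (n1+0)) : ℕ) ≤ n1)]
      have hcb : c = b := by rw [← T2l, ← T20]; congr 1
      rw [hcb, ← T1l]; congr 1
    · have hgt : ¬ ((Fin.last (n1 + n2) : ℕ) ≤ n1) := by simp [Fin.val_last]; omega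
      rw [dif_neg hgt, ← T2l]; congr 1
      apply Fin.ext; simp [Fin.val_last]; try omega
  · intro i j hij
    have hij' : (i : ℕ) ≤ (j : ℕ) := hij
    dsimp only
    by_cases hi : (i : ℕ) ≤ n1 <;> by_cases hj : (j : ℕ) ≤ n1
    · rw [dif_pos hi, dif_pos hj]; exact T1m (by simpa using hij')
    · rw [dif_pos hi, dif_neg hj]
      calc T1 ⟨i, by omega⟩ ≤ T1 (Fin.last n1) := T1m (by simp [Fin.le_def, Fin.val_last]; omega)
        _ = b := T1l
        _ = T2 0 := T20.symm
        _ ≤ T2 ⟨(j : ℕ) - n1, by omega⟩ := T2m (Fin.zero_le _)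
    · omega
    · rw [dif_neg hi, dif_neg hj]; exact T2m (by simp [Fin.le_def]; omega)
  · intro i
    have hiv : (i.castSucc : ℕ) = (i : ℕ) := rfl
    have hisv : (i.succ : ℕ) = (i : ℕ) + 1 := rfl
    dsimp only
    by_cases hi : ((i : ℕ) + 1) ≤ n1
    · rw [dif_pos (show (i.castSucc : ℕ) ≤ n1 by omega), dif_pos (by rw [hisv]; exact hi)]
      exact T1p ⟨(i : ℕ), by omega⟩
    · by_cases hi2 : (i : ℕ) ≤ n1
      · -- i = n1
        have hieq : (i : ℕ) = n1 := by omega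
        rw [dif_pos (show (i.castSucc : ℕ) ≤ n1 from by omega),
          dif_neg (show ¬ (i.succ : ℕ) ≤ n1 from by omega)]
        have hn2pos : 0 < n2 := by have := i.isLt; omega
        have e1 : (⟨(i.castSucc : ℕ), by omega⟩ : Fin (n1+1)) = Fin.last n1 :=
          Fin.ext (by simp [Fin.val_last, hiv, hieq])
        have e2 : (⟨(i.succ : ℕ) - n1, by omega⟩ : Fin (n2+1)) = (⟨0, hn2pos⟩ : Fin n2).succ :=
          Fin.ext (by simp [Fin.val_succ, hisv]; omega)
        rw [e1, T1l, ← T20, e2]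
        exact T2p ⟨0, hn2pos⟩
      · rw [dif_neg (show ¬ (i.castSucc : ℕ) ≤ n1 from by omega),
          dif_neg (show ¬ (i.succ : ℕ) ≤ n1 from by omega)]
        have hlt : (i : ℕ) - n1 < n2 := by have := i.isLt; omega
        have e2 : (⟨(i.succ : ℕ) - n1, by omega⟩ : Fin (n2+1)) = (⟨(i : ℕ) - n1, hlt⟩ : Fin n2).succ :=
          Fin.ext (by simp [Fin.val_succ, hisv]; omega)
        rw [e2]
        exact T2p ⟨(i : ℕ) - n1, hlt⟩

lemma pc1_left {γ : ℝ → Ed d} {a b c : ℝ} (h : PiecewiseC1On γ a b) (hc1 : a ≤ c) (hc2 : c ≤ b) :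
    PiecewiseC1On γ a c := by
  obtain ⟨hcont, n, T, h0, hl, hm, hp⟩ := h
  refine ⟨hcont.mono (Set.Icc_subset_Icc le_rfl hc2), n, fun i => min (T i) c,
    by dsimp only; rw [h0, min_eq_left hc1], by dsimp only; rw [hl, min_eq_right hc2],
    fun i j hij => min_le_min (hm hij) le_rfl, ?_⟩
  intro i
  dsimp only
  by_cases hTi : T i.castSucc ≤ c
  · have hsub : Set.Icc (min (T i.castSucc) c) (min (T i.succ) c) ⊆
        Set.Icc (T i.castSucc) (T i.succ) := by
      rw [min_eq_left hTi]
      exact Set.Icc_subset_Icc le_rfl (min_le_left _ _)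
    exact (hp i).mono hsub
  · have h1 : min (T i.castSucc) c = c := min_eq_right (by linarith [not_le.mp hTi])
    have h2 : min (T i.succ) c = c := min_eq_right
      (by linarith [not_le.mp hTi, hm (Fin.castSucc_lt_succ : i.castSucc < i.succ).le])
    rw [h1, h2, Set.Icc_self]
    intro y hy
    have : y = c := hy
    subst this
    exact contDiffWithinAt_singleton

lemma pc1_right {γ : ℝ → Ed d} {a b c : ℝ} (h : PiecewiseC1On γ a b) (hc1 : a ≤ c) (hc2 : c ≤ b) :
    PiecewiseC1On γ c b := by
  obtain ⟨hcont, n, T, h0, hl, hm, hp⟩ := h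
  refine ⟨hcont.mono (Set.Icc_subset_Icc hc1 le_rfl), n, fun i => max (T i) c,
    by dsimp only; rw [h0, max_eq_right hc1], by dsimp only; rw [hl, max_eq_left hc2],
    fun i j hij => max_le_max (hm hij) le_rfl, ?_⟩
  intro i
  dsimp only
  by_cases hTi : c ≤ T i.succ
  · have hsub : Set.Icc (max (T i.castSucc) c) (max (T i.succ) c) ⊆
        Set.Icc (T i.castSucc) (T i.succ) := by
      rw [max_eq_left hTi]
      exact Set.Icc_subset_Icc (le_max_left _ _) le_rfl
    exact (hp i).mono hsub
  · have h1 : max (T i.castSucc) c = c := max_eq_right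
      (by linarith [not_le.mp hTi, hm (Fin.castSucc_lt_succ : i.castSucc < i.succ).le])
    have h2 : max (T i.succ) c = c := max_eq_right (by linarith [not_le.mp hTi])
    rw [h1, h2, Set.Icc_self]
    intro y hy
    have : y = c := hy
    subst this
    exact contDiffWithinAt_singleton

end PC1

section INT
open MeasureTheory intervalIntegral
variable {d : ℕ}

lemma ae_ne (q : ℝ) : ∀ᵐ x : ℝ ∂volume, x ≠ q := by
  rw [MeasureTheory.ae_iff]
  have : {a : ℝ | ¬ a ≠ q} = {q} := by ext a; simp
  rw [this]
  exact Real.volume_singleton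

lemma ae_mem_Ioo_of_Ioc {p q : ℝ} :
    ∀ᵐ x : ℝ ∂volume, x ∈ Set.Ioc p q → x ∈ Set.Ioo p q := by
  filter_upwards [ae_ne q] with x hx hmem
  exact ⟨hmem.1, lt_of_le_of_ne hmem.2 hx⟩

lemma intervalIntegral_congr_Ioo {f g : ℝ → ℝ} {p q : ℝ} (hpq : p ≤ q)
    (h : ∀ x ∈ Set.Ioo p q, f x = g x) :
    ∫ s in p..q, f s = ∫ s in p..q, g s := by
  apply intervalIntegral.integral_congr_ae
  rw [Set.uIoc_of_le hpq]
  filter_upwards [ae_mem_Ioo_of_Ioc (p := p) (q := q)] with x hx hmem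
  exact h x (hx hmem)

lemma intervalIntegrable_congr_Ioo {f g : ℝ → ℝ} {p q : ℝ} (hpq : p ≤ q)
    (h : ∀ x ∈ Set.Ioo p q, f x = g x)
    (hf : IntervalIntegrable f volume p q) :
    IntervalIntegrable g volume p q := by
  constructor
  · apply hf.1.congr_fun_ae
    rw [Filter.EventuallyEq, MeasureTheory.ae_restrict_iff' measurableSet_Ioc]
    filter_upwards [ae_mem_Ioo_of_Ioc (p := p) (q := q)] with x hx hmem
    exact h x (hx hmem)
  · rw [Set.Ioc_eq_empty (by simp [hpq] : ¬ q < p)]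
    exact MeasureTheory.integrableOn_empty

lemma integrand_intervalIntegrable {La : Ed d → Ed d → ℝ}
    (hLa : Continuous fun p : Ed d × Ed d => La p.1 p.2)
    {γ : ℝ → Ed d} {a b : ℝ} (h : PiecewiseC1On γ a b) :
    IntervalIntegrable (fun s => La (γ s) (deriv γ s)) volume a b := by
  obtain ⟨hc, n, T, h0, hl, hm, hp⟩ := h
  have piece : ∀ i : Fin n, IntervalIntegrable (fun s => La (γ s) (deriv γ s)) volume
      (T i.castSucc) (T i.succ) := by
    intro i
    have hpq : T i.castSucc ≤ T i.succ := hm (Fin.castSucc_lt_succ : i.castSucc < i.succ).le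
    rcases eq_or_lt_of_le hpq with heq | hlt
    · exact heq ▸ IntervalIntegrable.refl
    · have hu : UniqueDiffOn ℝ (Set.Icc (T i.castSucc) (T i.succ)) := uniqueDiffOn_Icc hlt
      have hd : ContinuousOn (derivWithin γ (Set.Icc (T i.castSucc) (T i.succ)))
          (Set.Icc (T i.castSucc) (T i.succ)) :=
        (hp i).continuousOn_derivWithin hu le_rfl
      have hF : ContinuousOn
          (fun s => La (γ s) (derivWithin γ (Set.Icc (T i.castSucc) (T i.succ)) s))
          (Set.Icc (T i.castSucc) (T i.succ)) :=
        by have := hLa.comp_continuousOn (((hp i).continuousOn).prodMk hd); exact this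
      have hFi : IntervalIntegrable
          (fun s => La (γ s) (derivWithin γ (Set.Icc (T i.castSucc) (T i.succ)) s))
          volume (T i.castSucc) (T i.succ) := hF.intervalIntegrable_of_Icc hpq
      apply intervalIntegrable_congr_Ioo hpq ?_ hFi
      intro x hx
      rw [derivWithin_of_mem_nhds (Icc_mem_nhds hx.1 hx.2)]
  have key : ∀ m : ℕ, (hmn : m ≤ n) → IntervalIntegrable
      (fun s => La (γ s) (deriv γ s)) volume (T 0) (T ⟨m, by omega⟩) := by
    intro m
    induction m with
    | zero => intro _; exact IntervalIntegrable.refl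
    | succ k ih =>
      intro hk
      have h1 := ih (by omega)
      have h2 := piece ⟨k, by omega⟩
      exact h1.trans h2
  have := key n le_rfl
  rwa [h0, show (⟨n, by omega⟩ : Fin (n+1)) = Fin.last n from rfl, hl] at this

lemma actionA_ge {La : Ed d → Ed d → ℝ} {B : ℝ} (hB : 0 ≤ B) (hb : ∀ x v, -B ≤ La x v)
    {γ : ℝ → Ed d} {a b : ℝ} (hab : a ≤ b) : -B * (b - a) ≤ actionA La γ a b := by
  by_cases hInt : IntervalIntegrable (fun s => La (γ s) (deriv γ s)) volume a b
  · have hmono := intervalIntegral.integral_mono_on hab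
      (_root_.intervalIntegrable_const (c := -B)) hInt (fun x _ => hb _ _)
    calc -B * (b - a) = ∫ _ in a..b, (-B) := by
          rw [intervalIntegral.integral_const]; simp [smul_eq_mul]; ring
      _ ≤ _ := hmono
  · rw [actionA, intervalIntegral.integral_undef hInt]
    nlinarith

lemma actionA_shift (La : Ed d → Ed d → ℝ) (γ : ℝ → Ed d) (τ σ : ℝ) :
    actionA La (fun s' => γ (s' + τ)) 0 σ = actionA La γ τ (σ + τ) := by
  unfold actionA
  have he : ∀ s, La ((fun s' => γ (s' + τ)) s) (deriv (fun s' => γ (s' + τ)) s) =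
      La (γ (s + τ)) (deriv γ (s + τ)) := by
    intro s; rw [deriv_comp_add_const]
  rw [intervalIntegral.integral_congr (g := fun s => La (γ (s + τ)) (deriv γ (s + τ)))
    (fun s _ => he s)]
  have := intervalIntegral.integral_comp_add_right (a := 0) (b := σ)
    (fun r => La (γ r) (deriv γ r)) τ
  simpa using this

end INT

section GLUE
open MeasureTheory
variable {d : ℕ}

lemma glue_curve {La : Ed d → Ed d → ℝ}
    (hLa : Continuous fun p : Ed d × Ed d => La p.1 p.2)
    {γ₁ γ₂ : ℝ → Ed d} {τ σ : ℝ} (hτ : 0 ≤ τ) (hσ : 0 ≤ σ)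
    (h1 : PiecewiseC1On γ₁ 0 τ) (h2 : PiecewiseC1On γ₂ 0 σ) (hend : γ₁ τ = γ₂ 0) :
    ∃ η : ℝ → Ed d, PiecewiseC1On η 0 (τ + σ) ∧ η 0 = γ₁ 0 ∧ η (τ + σ) = γ₂ σ ∧
      actionA La η 0 (τ + σ) = actionA La γ₁ 0 τ + actionA La γ₂ 0 σ := by
  classical
  set η : ℝ → Ed d := fun s => if s ≤ τ then γ₁ s else γ₂ (s - τ) with hη
  have he1 : ∀ s ∈ Set.Icc (0:ℝ) τ, γ₁ s = η s := by
    intro s hs; simp only [hη]; rw [if_pos hs.2]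
  have he2 : ∀ s ∈ Set.Icc τ (τ + σ), γ₂ (s + -τ) = η s := by
    intro s hs
    by_cases h : s ≤ τ
    · have hs' : s = τ := le_antisymm h hs.1
      subst hs'
      simp only [hη, if_pos le_rfl, add_neg_cancel]
      exact hend.symm
    · simp only [hη, if_neg h, sub_eq_add_neg]
  have hp1 : PiecewiseC1On η 0 τ := pc1_congr h1 he1
  have hp2 : PiecewiseC1On η τ (τ + σ) := by
    have hsh := pc1_shift (-τ) h2
    simp only [zero_sub, neg_neg, sub_neg_eq_add, zero_add] at hsh
    rw [add_comm σ τ] at hsh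
    exact pc1_congr hsh he2
  have hi1 : IntervalIntegrable (fun s => La (η s) (deriv η s)) volume 0 τ :=
    integrand_intervalIntegrable hLa hp1
  have hi2 : IntervalIntegrable (fun s => La (η s) (deriv η s)) volume τ (τ + σ) :=
    integrand_intervalIntegrable hLa hp2
  have hadd : actionA La η 0 (τ + σ) =
      (∫ s in (0:ℝ)..τ, La (η s) (deriv η s)) + ∫ s in τ..(τ + σ), La (η s) (deriv η s) :=
    (intervalIntegral.integral_add_adjacent_intervals hi1 hi2).symm
  have hA1 : (∫ s in (0:ℝ)..τ, La (η s) (deriv η s)) = actionA La γ₁ 0 τ := by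
    apply intervalIntegral_congr_Ioo hτ
    intro x hx
    have hev : η =ᶠ[nhds x] γ₁ := by
      filter_upwards [isOpen_Iio.mem_nhds hx.2] with y hy
      simp only [hη]; rw [if_pos (le_of_lt hy)]
    rw [hev.deriv_eq, hev.eq_of_nhds]
  have hA2 : (∫ s in τ..(τ + σ), La (η s) (deriv η s)) = actionA La γ₂ 0 σ := by
    have hstep : (∫ s in τ..(τ + σ), La (η s) (deriv η s)) =
        ∫ s in τ..(τ + σ), La (γ₂ (s - τ)) (deriv γ₂ (s - τ)) := by
      apply intervalIntegral_congr_Ioo (by linarith)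
      intro x hx
      have hev : η =ᶠ[nhds x] (fun s => γ₂ (s - τ)) := by
        filter_upwards [isOpen_Ioi.mem_nhds hx.1] with y hy
        simp only [hη]; rw [if_neg (not_le.mpr hy)]
      rw [hev.deriv_eq, hev.eq_of_nhds, deriv_comp_sub_const]
    rw [hstep]
    have := intervalIntegral.integral_comp_sub_right (a := τ) (b := τ + σ)
      (fun r => La (γ₂ r) (deriv γ₂ r)) τ
    simpa [actionA] using this
  refine ⟨η, pc1_trans hp1 hp2, ?_, ?_, by rw [hadd, hA1, hA2]⟩
  · simp only [hη]; rw [if_pos hτ]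
  · by_cases h : τ + σ ≤ τ
    · have hσ0 : σ = 0 := by linarith
      subst hσ0
      simp only [hη, add_zero, if_pos le_rfl]
      exact hend
    · simp only [hη]; rw [if_neg h, add_sub_cancel_left]

lemma periodic_lower_bound {u : Ed d → ℝ} (hu : Continuous u) (hper : IsZdPeriodic u) :
    ∃ m : ℝ, ∀ x, m ≤ u x := by
  set e := (EuclideanSpace.equiv (Fin d) ℝ).symm
  set K : Set (Ed d) := e '' (Set.univ.pi fun _ => Set.Icc (0:ℝ) 1) with hK
  have hKc : IsCompact K :=
    ((isCompact_univ_pi fun _ => isCompact_Icc).image e.continuous)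
  have hKne : K.Nonempty := ⟨e (fun _ => 0), ⟨fun _ => 0, fun i _ => ⟨le_rfl, zero_le_one⟩, rfl⟩⟩
  obtain ⟨z, hz, hzmin⟩ := hKc.exists_isMinOn hKne hu.continuousOn
  refine ⟨u z, fun x => ?_⟩
  set k : Fin d → ℤ := fun i => ⌊x i⌋ with hk
  set y : Ed d := e (fun i => Int.fract (x i)) with hy
  have hxy : x = y + intVec d k := by
    refine PiLp.ext fun i => ?_
    show x i = Int.fract (x i) + (⌊x i⌋ : ℝ)
    rw [Int.fract_add_floor]
  have hmem : y ∈ K := ⟨fun i => Int.fract (x i),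
    fun i _ => ⟨Int.fract_nonneg _, (Int.fract_lt_one _).le⟩, rfl⟩
  have : u x = u y := by rw [hxy]; exact hper y k
  rw [this]
  exact hzmin hmem

end GLUE

section LO
open MeasureTheory
variable {d : ℕ}

lemma LOa_of_ne {La : Ed d → Ed d → ℝ} {u : Ed d → ℝ} {σ : ℝ} (h : σ ≠ 0) (x : Ed d) :
    LOa La u σ x = sInf {r | ∃ γ : ℝ → Ed d, PiecewiseC1On γ 0 σ ∧ γ σ = x ∧
      r = u (γ 0) + actionA La γ 0 σ} := by
  unfold LOa; rw [if_neg h]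

lemma LOa_zero {La : Ed d → Ed d → ℝ} {u : Ed d → ℝ} (x : Ed d) :
    LOa La u 0 x = u x := by
  unfold LOa; rw [if_pos rfl]

lemma cset_nonempty (La : Ed d → Ed d → ℝ) (w : Ed d → ℝ) {σ : ℝ} (hσ : 0 ≤ σ) (x : Ed d) :
    {r | ∃ γ : ℝ → Ed d, PiecewiseC1On γ 0 σ ∧ γ σ = x ∧
      r = w (γ 0) + actionA La γ 0 σ}.Nonempty :=
  ⟨w x + actionA La (fun _ => x) 0 σ, fun _ => x, pc1_const hσ, rfl, rfl⟩

lemma cset_lb {La : Ed d → Ed d → ℝ} {B : ℝ} (hB : 0 ≤ B) (hb : ∀ z v, -B ≤ La z v)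
    {w : Ed d → ℝ} {mw : ℝ} (hw : ∀ y, mw ≤ w y) {σ : ℝ} (x : Ed d) :
    ∀ r ∈ {r | ∃ γ : ℝ → Ed d, PiecewiseC1On γ 0 σ ∧ γ σ = x ∧
      r = w (γ 0) + actionA La γ 0 σ}, mw - B * σ ≤ r := by
  rintro r ⟨γ, hγ, -, rfl⟩
  have hA := actionA_ge hB hb (pc1_le hγ) (γ := γ)
  have h0 := hw (γ 0)
  have he : -B * (σ - 0) = -(B * σ) := by ring
  rw [he] at hA
  linarith

lemma cset_bdd {La : Ed d → Ed d → ℝ} {B : ℝ} (hB : 0 ≤ B) (hb : ∀ z v, -B ≤ La z v)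
    {w : Ed d → ℝ} {mw : ℝ} (hw : ∀ y, mw ≤ w y) {σ : ℝ} (x : Ed d) :
    BddBelow {r | ∃ γ : ℝ → Ed d, PiecewiseC1On γ 0 σ ∧ γ σ = x ∧
      r = w (γ 0) + actionA La γ 0 σ} :=
  ⟨mw - B * σ, fun _ hr => cset_lb hB hb hw x _ hr⟩

lemma LOa_lb {La : Ed d → Ed d → ℝ} {B : ℝ} (hB : 0 ≤ B) (hb : ∀ z v, -B ≤ La z v)
    {w : Ed d → ℝ} {mw : ℝ} (hw : ∀ y, mw ≤ w y) {σ : ℝ} (hσ : 0 ≤ σ) (x : Ed d) :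
    mw - B * σ ≤ LOa La w σ x := by
  by_cases h : σ = 0
  · rw [h, LOa_zero, mul_zero, sub_zero]; exact hw x
  · rw [LOa_of_ne h]
    exact le_csInf (cset_nonempty La w hσ x) (cset_lb hB hb hw x)

lemma lonew_set_lb {La : Ed d → Ed d → ℝ} {B : ℝ} (hB : 0 ≤ B) (hb : ∀ z v, -B ≤ La z v)
    {w : Ed d → ℝ} {mw : ℝ} (hw : ∀ y, mw ≤ w y) {t : ℝ} (ht : 0 ≤ t) (x : Ed d) :
    ∀ r ∈ {r | ∃ σ : ℝ, t ≤ σ ∧ σ ≤ 2 * t ∧ r = LOa La w σ x}, mw - B * (2 * t) ≤ r := by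
  rintro r ⟨τ, h1, h2, rfl⟩
  have hlb := LOa_lb hB hb hw (le_trans ht h1) x
  have hmul : B * τ ≤ B * (2 * t) := mul_le_mul_of_nonneg_left h2 hB
  linarith

lemma LOnew_lb {La : Ed d → Ed d → ℝ} {B : ℝ} (hB : 0 ≤ B) (hb : ∀ z v, -B ≤ La z v)
    {w : Ed d → ℝ} {mw : ℝ} (hw : ∀ y, mw ≤ w y) {t : ℝ} (ht : 0 ≤ t) (x : Ed d) :
    mw - B * (2 * t) ≤ LOnew La w t x :=
  le_csInf ⟨LOa La w t x, t, le_rfl, by linarith, rfl⟩ (lonew_set_lb hB hb hw ht x)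

lemma LOa_glue {La : Ed d → Ed d → ℝ}
    (hLa : Continuous fun p : Ed d × Ed d => La p.1 p.2)
    {B : ℝ} (hB : 0 ≤ B) (hb : ∀ z v, -B ≤ La z v)
    {u : Ed d → ℝ} {m : ℝ} (hm : ∀ y, m ≤ u y)
    {τ σ : ℝ} (hτ : 0 < τ) (hσ : 0 < σ)
    {γ : ℝ → Ed d} (hγ : PiecewiseC1On γ 0 σ) :
    LOa La u (τ + σ) (γ σ) ≤ LOa La u τ (γ 0) + actionA La γ 0 σ := by
  have hτσ : τ + σ ≠ 0 := by positivity
  have hkey : ∀ r ∈ {r | ∃ γ₁ : ℝ → Ed d, PiecewiseC1On γ₁ 0 τ ∧ γ₁ τ = γ 0 ∧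
      r = u (γ₁ 0) + actionA La γ₁ 0 τ},
      LOa La u (τ + σ) (γ σ) - actionA La γ 0 σ ≤ r := by
    rintro r ⟨γ₁, hγ₁, hγ₁e, rfl⟩
    obtain ⟨η, hηp, hη0, hηe, hηa⟩ := glue_curve hLa hτ.le hσ.le hγ₁ hγ hγ₁e
    have hle : LOa La u (τ + σ) (γ σ) ≤ u (η 0) + actionA La η 0 (τ + σ) := by
      rw [LOa_of_ne hτσ]
      exact csInf_le (cset_bdd hB hb hm (γ σ)) ⟨η, hηp, hηe, rfl⟩
    rw [hη0, hηa] at hle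
    linarith
  have h2 := le_csInf (cset_nonempty La u hτ.le (γ 0)) hkey
  rw [LOa_of_ne hτ.ne' (γ 0)]
  linarith

lemma LOa_split {La : Ed d → Ed d → ℝ}
    {B : ℝ} (hB : 0 ≤ B) (hb : ∀ z v, -B ≤ La z v)
    (w : Ed d → ℝ) {mw : ℝ} (hw : ∀ y, mw ≤ w y)
    {τ σ : ℝ} (hτ : 0 < τ) (hσ : 0 < σ)
    {γ : ℝ → Ed d} (hγ : PiecewiseC1On γ 0 (τ + σ)) :
    LOa La w σ (γ (τ + σ)) ≤ w (γ τ) + actionA La γ τ (τ + σ) := by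
  set γ' : ℝ → Ed d := fun s' => γ (s' + τ) with hγ'
  have hγ'p : PiecewiseC1On γ' 0 σ := by
    have hr : PiecewiseC1On γ τ (τ + σ) := pc1_right hγ (by linarith) (by linarith)
    have hsh := pc1_shift τ hr
    simp only [sub_self, add_sub_cancel_left] at hsh
    exact hsh
  have hγ'end : γ' σ = γ (τ + σ) := by simp only [hγ']; rw [add_comm]
  have hle : LOa La w σ (γ (τ + σ)) ≤ w (γ' 0) + actionA La γ' 0 σ := by
    rw [LOa_of_ne hσ.ne']
    exact csInf_le (cset_bdd hB hb hw (γ (τ + σ))) ⟨γ', hγ'p, hγ'end, rfl⟩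
  have h0 : γ' 0 = γ τ := by simp only [hγ', zero_add]
  have hact : actionA La γ' 0 σ = actionA La γ τ (τ + σ) := by
    rw [hγ', actionA_shift, add_comm σ τ]
  rwa [h0, hact] at hle


/-- the new Lax–Oleinik operators form a one-parameter semigroup:
`T̃ᵃ_{t+s} u = T̃ᵃ_t (T̃ᵃ_s u)` for all `t, s ≥ 0`. -/
theorem LOnew_semigroup
    {d : ℕ} (hd : 1 ≤ d) (La : Ed d → Ed d → ℝ) (hLa : TonelliAut La)
    (u : Ed d → ℝ) (hu : Continuous u) (huper : IsZdPeriodic u)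
    (t s : ℝ) (ht : 0 ≤ t) (hs : 0 ≤ s) :
    ∀ x : Ed d, LOnew La u (t + s) x = LOnew La (fun y => LOnew La u s y) t x := by
  intro x
  by_cases hs0 : s = 0
  · subst hs0
    have hgu : (fun y => LOnew La u 0 y) = u := by
      funext y
      have hset : {r | ∃ σ : ℝ, 0 ≤ σ ∧ σ ≤ 2 * 0 ∧ r = LOa La u σ y} = {u y} := by
        ext r
        simp only [Set.mem_setOf_eq, Set.mem_singleton_iff]
        constructor
        · rintro ⟨σ, h1, h2, rfl⟩
          have hσ0 : σ = 0 := le_antisymm (by linarith) h1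
          rw [hσ0, LOa_zero]
        · rintro rfl; exact ⟨0, le_rfl, by norm_num, (LOa_zero y).symm⟩
      show sInf {r | ∃ σ : ℝ, 0 ≤ σ ∧ σ ≤ 2 * 0 ∧ r = LOa La u σ y} = u y
      rw [hset, csInf_singleton]
    rw [hgu, add_zero]
  by_cases ht0 : t = 0
  · subst ht0
    rw [zero_add]
    have hset : {r | ∃ σ : ℝ, 0 ≤ σ ∧ σ ≤ 2 * 0 ∧
        r = LOa La (fun y => LOnew La u s y) σ x} = {LOnew La u s x} := by
      ext r
      simp only [Set.mem_setOf_eq, Set.mem_singleton_iff]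
      constructor
      · rintro ⟨σ, h1, h2, rfl⟩
        have hσ0 : σ = 0 := le_antisymm (by linarith) h1
        rw [hσ0, LOa_zero]
      · rintro rfl; exact ⟨0, le_rfl, by norm_num, (LOa_zero x).symm⟩
    show LOnew La u s x = sInf {r | ∃ σ : ℝ, 0 ≤ σ ∧ σ ≤ 2 * 0 ∧
      r = LOa La (fun y => LOnew La u s y) σ x}
    rw [hset, csInf_singleton]
  have ht' : 0 < t := lt_of_le_of_ne ht (Ne.symm ht0)
  have hs' : 0 < s := lt_of_le_of_ne hs (Ne.symm hs0)
  obtain ⟨B0, hB0⟩ := hLa.2.2.2 0 le_rfl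
  set B : ℝ := max B0 0 with hBdef
  have hBnn : 0 ≤ B := le_max_right _ _
  have hBlb : ∀ z v : Ed d, -B ≤ La z v := by
    intro z v
    have h := hB0 z v
    rw [zero_mul, zero_sub] at h
    have : -B ≤ -B0 := neg_le_neg (le_max_left _ _)
    linarith
  obtain ⟨m, hm⟩ := periodic_lower_bound hu huper
  have hLac : Continuous fun p : Ed d × Ed d => La p.1 p.2 := hLa.1.continuous
  set g : Ed d → ℝ := fun y => LOnew La u s y with hg
  have hgm : ∀ y, m - B * (2 * s) ≤ g y := fun y => LOnew_lb hBnn hBlb hm hs y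
  apply le_antisymm
  · -- LOnew La u (t+s) x ≤ LOnew La g t x
    refine le_csInf ⟨LOa La g t x, ⟨t, le_rfl, by linarith, rfl⟩⟩ ?_
    rintro r ⟨σ, hσ1, hσ2, rfl⟩
    have hσpos : 0 < σ := lt_of_lt_of_le ht' hσ1
    rw [LOa_of_ne hσpos.ne']
    apply le_csInf (cset_nonempty La g hσpos.le x)
    rintro r ⟨γ, hγp, hγe, rfl⟩
    have hkey : ∀ r' ∈ {r' | ∃ τ : ℝ, s ≤ τ ∧ τ ≤ 2 * s ∧ r' = LOa La u τ (γ 0)},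
        LOnew La u (t + s) x - actionA La γ 0 σ ≤ r' := by
      rintro r' ⟨τ, hτ1, hτ2, rfl⟩
      have hτpos : 0 < τ := lt_of_lt_of_le hs' hτ1
      have h1 : LOnew La u (t + s) x ≤ LOa La u (τ + σ) x := by
        exact csInf_le ⟨m - B * (2 * (t + s)), lonew_set_lb hBnn hBlb hm (by linarith) x⟩
          ⟨τ + σ, by linarith, by linarith, rfl⟩
      have h2 : LOa La u (τ + σ) x ≤ LOa La u τ (γ 0) + actionA La γ 0 σ := by
        have hgl := LOa_glue hLac hBnn hBlb hm hτpos hσpos hγp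
        rwa [hγe] at hgl
      linarith
    have hne : {r' | ∃ τ : ℝ, s ≤ τ ∧ τ ≤ 2 * s ∧ r' = LOa La u τ (γ 0)}.Nonempty :=
      ⟨LOa La u s (γ 0), s, le_rfl, by linarith, rfl⟩
    have hfin := le_csInf hne hkey
    have hgval : g (γ 0) =
        sInf {r' | ∃ τ : ℝ, s ≤ τ ∧ τ ≤ 2 * s ∧ r' = LOa La u τ (γ 0)} := rfl
    rw [hgval]
    linarith
  · -- LOnew La g t x ≤ LOnew La u (t+s) x
    refine le_csInf ⟨LOa La u (t + s) x, ⟨t + s, le_rfl, by linarith, rfl⟩⟩ ?_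
    rintro r ⟨ρ, hρ1, hρ2, rfl⟩
    set σ : ℝ := min (2 * t) (ρ - s) with hσdef
    set τ : ℝ := ρ - σ with hτdef
    have hσ1 : t ≤ σ := le_min (by linarith) (by linarith)
    have hσ2 : σ ≤ 2 * t := min_le_left _ _
    have hτ1 : s ≤ τ := by
      have hh : σ ≤ ρ - s := min_le_right _ _
      rw [hτdef]; linarith
    have hτ2 : τ ≤ 2 * s := by
      have hh1 : ρ - 2 * s ≤ 2 * t := by linarith
      have hh2 : ρ - 2 * s ≤ ρ - s := by linarith
      have hh : ρ - 2 * s ≤ σ := le_min hh1 hh2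
      rw [hτdef]; linarith
    have hρeq : ρ = τ + σ := by rw [hτdef]; ring
    have hσpos : 0 < σ := lt_of_lt_of_le ht' hσ1
    have hτpos : 0 < τ := lt_of_lt_of_le hs' hτ1
    have hstep1 : LOnew La g t x ≤ LOa La g σ x :=
      csInf_le ⟨(m - B * (2 * s)) - B * (2 * t), lonew_set_lb hBnn hBlb hgm ht x⟩
        ⟨σ, hσ1, hσ2, rfl⟩
    have hstep2 : LOa La g σ x ≤ LOa La u ρ x := by
      rw [LOa_of_ne (show ρ ≠ 0 by intro h; rw [h] at hρ1; linarith)]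
      apply le_csInf (cset_nonempty La u (by linarith) x)
      rintro r' ⟨γ, hγp, hγe, rfl⟩
      rw [hρeq] at hγp hγe
      have hs1 : LOa La g σ x ≤ g (γ τ) + actionA La γ τ (τ + σ) := by
        have hsp := LOa_split hBnn hBlb g hgm hτpos hσpos hγp
        rwa [hγe] at hsp
      have hs2 : g (γ τ) ≤ LOa La u τ (γ τ) :=
        csInf_le ⟨m - B * (2 * s), lonew_set_lb hBnn hBlb hm hs (γ τ)⟩ ⟨τ, hτ1, hτ2, rfl⟩
      have hs3 : LOa La u τ (γ τ) ≤ u (γ 0) + actionA La γ 0 τ := by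
        rw [LOa_of_ne hτpos.ne']
        exact csInf_le (cset_bdd hBnn hBlb hm (γ τ))
          ⟨γ, pc1_left hγp (by linarith) (by linarith), rfl, rfl⟩
      have hs4 : actionA La γ 0 τ + actionA La γ τ (τ + σ) = actionA La γ 0 (τ + σ) :=
        intervalIntegral.integral_add_adjacent_intervals
          (integrand_intervalIntegrable hLac (pc1_left hγp (by linarith) (by linarith)))
          (integrand_intervalIntegrable hLac (pc1_right hγp (by linarith) (by linarith)))
      rw [hρeq]
      linarith
    linarith


end LO
end
end

section
/- For every continuous ℤ^d-periodic function u : ℝ^d → ℝ, sup_{x ∈ ℝ^d} |T̃^a_t u(x) − u(x)| → 0 as t → 0⁺; that is, T̃^a_t u converges uniformly to u as t tends to 0 from the right. -/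
open Set Filter

noncomputable section

open MeasureTheory

lemma cube_compact (d : ℕ) (a b : ℝ) : IsCompact {y : Ed d | ∀ i, y i ∈ Icc a b} := by
  have : {y : Ed d | ∀ i, y i ∈ Icc a b} =
      (EuclideanSpace.equiv (Fin d) ℝ).toHomeomorph ⁻¹' (Set.pi univ fun _ => Icc a b) := by
    ext y
    constructor
    · intro h i _; exact h i
    · intro h i; exact h i (mem_univ i)
  rw [this, Homeomorph.isCompact_preimage]
  exact isCompact_univ_pi fun i => isCompact_Icc

lemma coord_le_norm {d : ℕ} (x : Ed d) (i : Fin d) : |x i| ≤ ‖x‖ := by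
  rw [EuclideanSpace.norm_eq x]
  have h1 : |x i| = Real.sqrt (‖x i‖^2) := by
    rw [Real.sqrt_sq_eq_abs]; simp
  rw [h1]
  apply Real.sqrt_le_sqrt
  exact Finset.single_le_sum (f := fun j => ‖x j‖^2) (fun j _ => sq_nonneg _) (Finset.mem_univ i)

lemma reduce {d : ℕ} (x : Ed d) : ∃ k : Fin d → ℤ, ∀ i, (x - intVec d k) i ∈ Icc (0:ℝ) 1 := by
  refine ⟨fun i => ⌊x i⌋, fun i => ?_⟩
  have h : (x - intVec d (fun i => ⌊x i⌋)) i = x i - (⌊x i⌋ : ℝ) := rfl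
  rw [h]
  exact ⟨sub_nonneg.2 (Int.floor_le _), by
    have := Int.lt_floor_add_one (x i); linarith⟩

lemma periodic_bound {d : ℕ} {f : Ed d → ℝ} (hf : Continuous f)
    (hper : ∀ (x : Ed d) (k : Fin d → ℤ), f (x + intVec d k) = f x) :
    ∃ M : ℝ, 0 ≤ M ∧ ∀ x, |f x| ≤ M := by
  obtain ⟨M, hM⟩ := (cube_compact d 0 1).exists_bound_of_continuousOn hf.continuousOn
  refine ⟨max M 0, le_max_right _ _, fun x => ?_⟩
  obtain ⟨k, hk⟩ := reduce x
  have hfx : f x = f (x - intVec d k) := by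
    conv_lhs => rw [← sub_add_cancel x (intVec d k)]
    exact hper _ k
  rw [hfx]
  have := hM (x - intVec d k) hk
  rw [Real.norm_eq_abs] at this
  exact le_trans this (le_max_left _ _)

lemma periodic_unifcont {d : ℕ} {u : Ed d → ℝ} (hu : Continuous u) (huper : IsZdPeriodic u) :
    ∀ ε : ℝ, 0 < ε → ∃ r : ℝ, 0 < r ∧ ∀ x y : Ed d, dist x y < r → |u x - u y| < ε := by
  intro ε hε
  have hK2 := cube_compact d (-1) 2
  have huc := hK2.uniformContinuousOn_of_continuous hu.continuousOn
  rw [Metric.uniformContinuousOn_iff] at huc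
  obtain ⟨r', hr', h⟩ := huc ε hε
  refine ⟨min r' 1, by positivity, fun x y hxy => ?_⟩
  obtain ⟨k, hk⟩ := reduce x
  have hux : u x = u (x - intVec d k) := by
    conv_lhs => rw [← sub_add_cancel x (intVec d k)]
    exact huper _ k
  have huy : u y = u (y - intVec d k) := by
    conv_lhs => rw [← sub_add_cancel y (intVec d k)]
    exact huper _ k
  have hxK : (x - intVec d k) ∈ {z : Ed d | ∀ i, z i ∈ Icc (-1:ℝ) 2} := by
    intro i
    exact ⟨by linarith [(hk i).1], by linarith [(hk i).2]⟩
  have hyK : (y - intVec d k) ∈ {z : Ed d | ∀ i, z i ∈ Icc (-1:ℝ) 2} := by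
    intro i
    have h1 : (y - intVec d k) i = (x - intVec d k) i + (y - x) i := by
      show y i - _ = (x i - _) + (y i - x i); ring
    have h2 : |(y - x) i| ≤ ‖y - x‖ := coord_le_norm _ i
    have h3 : ‖y - x‖ = dist x y := by rw [dist_comm, dist_eq_norm_sub', norm_sub_rev]
    have h4 : |(y - x) i| ≤ 1 := by
      rw [h3] at h2; exact le_trans h2 (le_of_lt (lt_of_lt_of_le hxy (min_le_right _ _)))
    have h5 := abs_le.1 h4
    exact ⟨by linarith [(hk i).1], by linarith [(hk i).2]⟩
  have hdist : dist (x - intVec d k) (y - intVec d k) < r' := by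
    rw [dist_sub_right]
    exact lt_of_lt_of_le hxy (min_le_left _ _)
  have := h _ hxK _ hyK hdist
  rw [Real.dist_eq] at this
  rw [hux, huy]
  exact this
lemma cover_piece {n : ℕ} (T : Fin (n+1) → ℝ) (hmono : Monotone T) (hn : 1 ≤ n)
    (s : ℝ) (hs : s ∈ Icc (T 0) (T (Fin.last n))) :
    ∃ i : Fin n, s ∈ Icc (T i.castSucc) (T i.succ) := by
  classical
  set F : Finset (Fin (n+1)) := Finset.univ.filter (fun j => T j ≤ s) with hF
  have h0F : (0 : Fin (n+1)) ∈ F := by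
    simp [hF, hs.1]
  have hne : F.Nonempty := ⟨0, h0F⟩
  set j := F.max' hne with hj
  have hjF : j ∈ F := F.max'_mem hne
  have hTj : T j ≤ s := by simpa [hF] using hjF
  by_cases hlast : j = Fin.last n
  · have hseq : s = T (Fin.last n) := le_antisymm hs.2 (by rw [← hlast]; exact hTj)
    obtain ⟨m, rfl⟩ : ∃ m, n = m + 1 := ⟨n - 1, by omega⟩
    have hsucc : (Fin.last m).succ = Fin.last (m+1) := by ext; simp [Fin.last]
    refine ⟨Fin.last m, ?_, ?_⟩
    · rw [hseq]; exact hmono (Fin.le_last _)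
    · rw [hsucc, hseq]
  · have hjlt : (j : ℕ) < n := by
      have := Fin.lt_last_iff_ne_last.2 hlast
      exact this
    refine ⟨⟨j, hjlt⟩, ?_, ?_⟩
    · have : (⟨j, hjlt⟩ : Fin n).castSucc = j := by ext; rfl
      rw [this]; exact hTj
    · set j' : Fin (n+1) := (⟨j, hjlt⟩ : Fin n).succ with hj'
      by_contra hcon
      push_neg at hcon
      have hj'F : j' ∈ F := by simp [hF, hcon.le]
      have := F.le_max' j' hj'F
      rw [← hj] at this
      have : (j' : ℕ) ≤ (j : ℕ) := this
      simp [hj'] at this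

lemma action_lb {d : ℕ} {La : Ed d → Ed d → ℝ}
    (hcont : Continuous fun p : Ed d × Ed d => La p.1 p.2)
    {A B : ℝ} (hA : 0 ≤ A) (hAB : ∀ x v : Ed d, A * ‖v‖ - B ≤ La x v)
    {γ : ℝ → Ed d} {σ : ℝ} (hσ : 0 < σ) (hγ : PiecewiseC1On γ 0 σ) :
    A * ‖γ σ - γ 0‖ - B * σ ≤ actionA La γ 0 σ := by
  classical
  obtain ⟨hγc, n, T, hT0, hTl, hTm, hTC⟩ := hγ
  have hn : 1 ≤ n := by
    rcases Nat.eq_zero_or_pos n with h | h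
    · exfalso; subst h
      have : T (Fin.last 0) = T 0 := rfl
      rw [hT0, hTl] at this; linarith
    · exact h
  -- piecewise bounds for deriv γ
  have hpiece : ∀ i : Fin n, ∃ C : ℝ, ∀ s ∈ Ioo (T i.castSucc) (T i.succ),
      DifferentiableAt ℝ γ s ∧ ‖deriv γ s‖ ≤ C := by
    intro i
    by_cases hlt : T i.castSucc < T i.succ
    · have hud := uniqueDiffOn_Icc hlt
      have hdc : ContinuousOn (derivWithin γ (Icc (T i.castSucc) (T i.succ)))
          (Icc (T i.castSucc) (T i.succ)) :=
        (hTC i).continuousOn_derivWithin hud le_rfl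
      obtain ⟨C, hC⟩ := isCompact_Icc.exists_bound_of_continuousOn hdc
      refine ⟨C, fun s hs => ?_⟩
      have hnb : Icc (T i.castSucc) (T i.succ) ∈ nhds s := Icc_mem_nhds hs.1 hs.2
      have hdwa : DifferentiableWithinAt ℝ γ (Icc (T i.castSucc) (T i.succ)) s :=
        ((hTC i).differentiableOn one_ne_zero) s (Ioo_subset_Icc_self hs)
      have hda : DifferentiableAt ℝ γ s := hdwa.differentiableAt hnb
      refine ⟨hda, ?_⟩
      rw [← derivWithin_of_mem_nhds hnb]
      exact hC s (Ioo_subset_Icc_self hs)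
    · exact ⟨0, fun s hs => absurd hs (by rw [Ioo_eq_empty hlt]; exact notMem_empty s)⟩
  choose Cf hCf using hpiece
  obtain ⟨C0, hC0⟩ := Finset.exists_le (Finset.univ.image Cf)
  set C : ℝ := max C0 0 with hCdef
  have hCnn : 0 ≤ C := le_max_right _ _
  have hCb : ∀ i, Cf i ≤ C := fun i =>
    le_trans (hC0 _ (Finset.mem_image_of_mem Cf (Finset.mem_univ i))) (le_max_left _ _)
  -- a.e. bound on deriv γ
  have hrange0 : volume (range T) = 0 := (Set.finite_range T).measure_zero _
  have haes : ∀ᵐ s ∂(volume.restrict (Ioc 0 σ)), ‖deriv γ s‖ ≤ C := by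
    have h1 : ∀ᵐ s ∂(volume.restrict (Ioc 0 σ)), s ∉ range T :=
      MeasureTheory.ae_restrict_of_ae (MeasureTheory.measure_eq_zero_iff_ae_notMem.1 hrange0)
    filter_upwards [h1, MeasureTheory.ae_restrict_mem measurableSet_Ioc] with s hs1 hs2
    have hsIcc : s ∈ Icc (T 0) (T (Fin.last n)) := by
      rw [hT0, hTl]; exact Ioc_subset_Icc_self hs2
    obtain ⟨i, hi⟩ := cover_piece T hTm hn s hsIcc
    have hio : s ∈ Ioo (T i.castSucc) (T i.succ) := by
      constructor
      · exact lt_of_le_of_ne hi.1 (fun h => hs1 ⟨_, h⟩)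
      · exact lt_of_le_of_ne hi.2 (fun h => hs1 ⟨_, h.symm⟩)
    exact le_trans ((hCf i s hio).2) (hCb i)
  -- integrability
  set K' : Set (Ed d) := γ '' Icc 0 σ with hK'def
  have hK' : IsCompact K' := isCompact_Icc.image_of_continuousOn hγc
  have hJ : IsCompact (K' ×ˢ Metric.closedBall (0 : Ed d) C) :=
    hK'.prod (isCompact_closedBall _ _)
  obtain ⟨M2, hM2⟩ := hJ.exists_bound_of_continuousOn hcont.continuousOn
  have hmemJ : ∀ᵐ s ∂(volume.restrict (Ioc 0 σ)),
      (γ s, deriv γ s) ∈ K' ×ˢ Metric.closedBall (0 : Ed d) C := by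
    filter_upwards [haes, MeasureTheory.ae_restrict_mem measurableSet_Ioc] with s h1 h2
    exact ⟨mem_image_of_mem γ (Ioc_subset_Icc_self h2), by
      rw [Metric.mem_closedBall, dist_zero_right]; exact h1⟩
  have hγm : MeasureTheory.AEStronglyMeasurable γ (volume.restrict (Ioc 0 σ)) :=
    (hγc.mono Ioc_subset_Icc_self).aestronglyMeasurable measurableSet_Ioc
  have hdm : MeasureTheory.AEStronglyMeasurable (deriv γ) (volume.restrict (Ioc 0 σ)) :=
    (measurable_deriv γ).aestronglyMeasurable
  have hfm : MeasureTheory.AEStronglyMeasurable (fun s => La (γ s) (deriv γ s))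
      (volume.restrict (Ioc 0 σ)) :=
    hcont.comp_aestronglyMeasurable (hγm.prodMk hdm)
  have hconstInt : ∀ c : ℝ, MeasureTheory.IntegrableOn (fun _ : ℝ => c) (Ioc 0 σ) volume :=
    fun c => MeasureTheory.integrableOn_const measure_Ioc_lt_top.ne
  have hfint : MeasureTheory.IntegrableOn (fun s => La (γ s) (deriv γ s)) (Ioc 0 σ) volume := by
    refine MeasureTheory.Integrable.mono' (hconstInt M2) hfm ?_
    filter_upwards [hmemJ] with s hs using hM2 _ hs
  have hgint : MeasureTheory.IntegrableOn (fun s => ‖deriv γ s‖) (Ioc 0 σ) volume := by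
    refine MeasureTheory.Integrable.mono' (hconstInt C) ((measurable_deriv γ).norm).aestronglyMeasurable ?_
    filter_upwards [haes] with s hs
    rwa [Real.norm_eq_abs, abs_of_nonneg (norm_nonneg _)]
  have hdint : MeasureTheory.IntegrableOn (deriv γ) (Ioc 0 σ) volume := by
    refine MeasureTheory.Integrable.mono' (hconstInt C) hdm ?_
    exact haes
  have hfII : IntervalIntegrable (fun s => La (γ s) (deriv γ s)) volume 0 σ :=
    (intervalIntegrable_iff_integrableOn_Ioc_of_le hσ.le).2 hfint
  have hgII : IntervalIntegrable (fun s => ‖deriv γ s‖) volume 0 σ :=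
    (intervalIntegrable_iff_integrableOn_Ioc_of_le hσ.le).2 hgint
  have hdII : IntervalIntegrable (deriv γ) volume 0 σ :=
    (intervalIntegrable_iff_integrableOn_Ioc_of_le hσ.le).2 hdint
  -- length lower bound
  set a : ℕ → ℝ := fun k => T ⟨min k n, by omega⟩ with hadef
  have ha0 : a 0 = 0 := by
    rw [hadef]; simp only [Nat.zero_min]; rw [← hT0]; rfl
  have han : a n = σ := by
    rw [hadef]; simp only [min_self]; rw [← hTl]; rfl
  have haval : ∀ k (hk : k ≤ n), a k = T ⟨k, by omega⟩ := by
    intro k hk; exact congrArg T (Fin.ext (by simp [Nat.min_eq_left hk]))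
  have hamono : Monotone a := by
    intro k l hkl
    exact hTm (by simp only [Fin.mk_le_mk]; omega)
  have hamem : ∀ k, a k ∈ Icc 0 σ := by
    intro k
    constructor
    · rw [← ha0]; exact hamono (Nat.zero_le _)
    · rcases le_or_gt k n with h | h
      · rw [← han]; exact hamono h
      · have he : a k = T (Fin.last n) :=
          congrArg T (Fin.ext (by simp [Fin.last, Nat.min_eq_right h.le]))
        rw [he, hTl]
  have hsub : ∀ k, uIcc (a k) (a (k+1)) ⊆ uIcc 0 σ := by
    intro k
    rw [uIcc_of_le (hamono (Nat.le_succ k)), uIcc_of_le hσ.le]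
    exact Icc_subset_Icc (hamem k).1 (hamem (k+1)).2
  have hadjg : ∀ k, k < n → IntervalIntegrable (fun s => ‖deriv γ s‖) volume (a k) (a (k+1)) :=
    fun k _ => hgII.mono_set (hsub k)
  have hadjd : ∀ k, k < n → IntervalIntegrable (deriv γ) volume (a k) (a (k+1)) :=
    fun k _ => hdII.mono_set (hsub k)
  have hpieceLB : ∀ k, k < n →
      dist (γ (a k)) (γ (a (k+1))) ≤ ∫ s in (a k)..(a (k+1)), ‖deriv γ s‖ := by
    intro k hk
    rcases eq_or_lt_of_le (hamono (Nat.le_succ k)) with heq | hlt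
    · rw [← heq]; simp
    · set i : Fin n := ⟨k, hk⟩ with hidef
      have hak : a k = T i.castSucc := haval k hk.le
      have hak1 : a (k+1) = T i.succ := haval (k+1) hk
      have hcontp : ContinuousOn γ (Icc (a k) (a (k+1))) := by
        rw [hak, hak1]; exact (hTC i).continuousOn
      have hderivp : ∀ s ∈ Ioo (a k) (a (k+1)), HasDerivWithinAt γ (deriv γ s) (Ioi s) s := by
        intro s hs
        rw [hak, hak1] at hs
        exact ((hCf i s hs).1).hasDerivAt.hasDerivWithinAt
      have hFTC := intervalIntegral.integral_eq_sub_of_hasDeriv_right_of_le hlt.le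
        hcontp hderivp (hadjd k hk)
      rw [dist_eq_norm_sub']
      calc ‖γ (a (k+1)) - γ (a k)‖ = ‖∫ s in (a k)..(a (k+1)), deriv γ s‖ := by rw [hFTC]
        _ ≤ ∫ s in (a k)..(a (k+1)), ‖deriv γ s‖ :=
          intervalIntegral.norm_integral_le_integral_norm hlt.le
  have hlen : ‖γ σ - γ 0‖ ≤ ∫ s in (0:ℝ)..σ, ‖deriv γ s‖ := by
    have hsum := intervalIntegral.sum_integral_adjacent_intervals (μ := volume)
      (f := fun s => ‖deriv γ s‖) (a := a) (n := n) hadjg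
    have htri := dist_le_range_sum_dist (fun k => γ (a k)) n
    calc ‖γ σ - γ 0‖ = dist (γ (a 0)) (γ (a n)) := by
          rw [ha0, han, dist_comm, dist_eq_norm_sub]
      _ ≤ ∑ k ∈ Finset.range n, dist (γ (a k)) (γ (a (k+1))) := htri
      _ ≤ ∑ k ∈ Finset.range n, ∫ s in (a k)..(a (k+1)), ‖deriv γ s‖ :=
          Finset.sum_le_sum fun k hkm => hpieceLB k (Finset.mem_range.1 hkm)
      _ = ∫ s in (0:ℝ)..σ, ‖deriv γ s‖ := by rw [hsum, ha0, han]
  -- combine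
  have hmono := intervalIntegral.integral_mono_on hσ.le
    (((hgII.const_mul A)).sub intervalIntegrable_const) hfII
    (fun s _ => hAB (γ s) (deriv γ s))
  have hcomp : (∫ s in (0:ℝ)..σ, (A * ‖deriv γ s‖ - B))
      = A * (∫ s in (0:ℝ)..σ, ‖deriv γ s‖) - B * σ := by
    rw [intervalIntegral.integral_sub (hgII.const_mul A) intervalIntegrable_const,
      intervalIntegral.integral_const_mul, intervalIntegral.integral_const]
    simp [mul_comm]
  rw [hcomp] at hmono
  refine le_trans ?_ hmono
  have := mul_le_mul_of_nonneg_left hlen hA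
  linarith

lemma const_piecewise {d : ℕ} (σ : ℝ) (hσ : 0 < σ) (x : Ed d) :
    PiecewiseC1On (fun _ : ℝ => x) 0 σ := by
  refine ⟨continuousOn_const, 1, fun i => σ * (i : ℕ), by simp, by simp [Fin.last], ?_,
    fun i => contDiffOn_const⟩
  intro i j hij
  have hn : (i : ℕ) ≤ (j : ℕ) := hij
  exact mul_le_mul_of_nonneg_left (by exact_mod_cast hn) hσ.le

lemma action_const {d : ℕ} (La : Ed d → Ed d → ℝ) (σ : ℝ) (x : Ed d) :
    actionA La (fun _ : ℝ => x) 0 σ = σ * La x 0 := by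
  have h : (fun s : ℝ => La ((fun _ : ℝ => x) s) (deriv (fun _ : ℝ => x) s))
      = fun _ : ℝ => La x 0 := by
    funext s; rw [deriv_const]
  rw [actionA, h, intervalIntegral.integral_const]
  simp

/-- `T̃ᵃ_t u` converges uniformly to `u` as `t → 0⁺`. -/
theorem LOnew_tendsto_id
    {d : ℕ} (hd : 1 ≤ d) (La : Ed d → Ed d → ℝ) (hLa : TonelliAut La)
    (u : Ed d → ℝ) (hu : Continuous u) (huper : IsZdPeriodic u) :
    ∀ ε : ℝ, 0 < ε → ∃ δ : ℝ, 0 < δ ∧ ∀ t : ℝ, 0 < t → t < δ →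
      ∀ x : Ed d, |LOnew La u t x - u x| < ε := by
  intro ε hε
  obtain ⟨hsmooth, hper, _, hsl⟩ := hLa
  have hLac : Continuous fun p : Ed d × Ed d => La p.1 p.2 := hsmooth.continuous
  obtain ⟨M, hM0, hM⟩ := periodic_bound hu huper
  obtain ⟨r, hr, hur⟩ := periodic_unifcont hu huper (ε/4) (by positivity)
  set A : ℝ := 2 * M / r with hAdef
  have hA : 0 ≤ A := by positivity
  obtain ⟨B, hB⟩ := hsl A hA
  obtain ⟨C0, hC00, hC0⟩ := periodic_bound (f := fun z => La z 0)
    (hLac.comp (continuous_id.prodMk continuous_const)) (fun z k => hper z 0 k)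
  -- lower bound on every element of the curve set
  have elem : ∀ (σ : ℝ), 0 < σ → ∀ x : Ed d, ∀ rv ∈ {rr : ℝ | ∃ γ : ℝ → Ed d,
      PiecewiseC1On γ 0 σ ∧ γ σ = x ∧ rr = u (γ 0) + actionA La γ 0 σ},
      u x - ε/4 - B * σ ≤ rv := by
    rintro σ hσ x rv ⟨γ, hγ, hend, rfl⟩
    have hact := action_lb hLac hA hB hσ hγ
    rw [hend] at hact
    by_cases hcase : dist (γ 0) x < r
    · have habs := abs_lt.1 (hur _ _ hcase)
      have hA0 : 0 ≤ A * ‖x - γ 0‖ := mul_nonneg hA (norm_nonneg _)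
      linarith
    · push_neg at hcase
      have hne : ‖x - γ 0‖ = dist (γ 0) x := by rw [dist_comm, dist_eq_norm_sub]
      have h1 : 2 * M ≤ A * ‖x - γ 0‖ := by
        rw [hne]
        calc 2 * M = A * r := by rw [hAdef]; field_simp
          _ ≤ A * dist (γ 0) x := mul_le_mul_of_nonneg_left hcase hA
      have h2 := abs_le.1 (hM (γ 0))
      have h3 := abs_le.1 (hM x)
      linarith
  -- membership of the constant curve
  have memc : ∀ (σ : ℝ), 0 < σ → ∀ x : Ed d, (u x + σ * La x 0) ∈ {rr : ℝ | ∃ γ : ℝ → Ed d,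
      PiecewiseC1On γ 0 σ ∧ γ σ = x ∧ rr = u (γ 0) + actionA La γ 0 σ} := by
    intro σ hσ x
    exact ⟨fun _ => x, const_piecewise σ hσ x, rfl, by rw [action_const]⟩
  -- bounds on LOa
  have hLOa_ub : ∀ (σ : ℝ), 0 < σ → ∀ x : Ed d, LOa La u σ x ≤ u x + σ * La x 0 := by
    intro σ hσ x
    rw [LOa, if_neg hσ.ne']
    exact csInf_le ⟨u x - ε/4 - B * σ, fun rv hrv => elem σ hσ x rv hrv⟩ (memc σ hσ x)
  have hLOa_lb : ∀ (σ : ℝ), 0 < σ → ∀ x : Ed d, u x - ε/4 - B * σ ≤ LOa La u σ x := by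
    intro σ hσ x
    rw [LOa, if_neg hσ.ne']
    exact le_csInf ⟨_, memc σ hσ x⟩ (elem σ hσ x)
  -- choose δ
  refine ⟨min (ε / (C0 + 1)) (ε / (4 * (|B| + 1))), by positivity, fun t ht htδ x => ?_⟩
  have ht1 : t < ε / (C0 + 1) := lt_of_lt_of_le htδ (min_le_left _ _)
  have ht2 : t < ε / (4 * (|B| + 1)) := lt_of_lt_of_le htδ (min_le_right _ _)
  have hS2lb : ∀ rv ∈ {rr : ℝ | ∃ σ : ℝ, t ≤ σ ∧ σ ≤ 2 * t ∧ rr = LOa La u σ x},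
      u x - ε/4 - |B| * (2 * t) ≤ rv := by
    rintro rv ⟨σ, hσ1, hσ2, rfl⟩
    have hσ : 0 < σ := lt_of_lt_of_le ht hσ1
    have hBσ : B * σ ≤ |B| * (2 * t) := by
      calc B * σ ≤ |B| * σ := mul_le_mul_of_nonneg_right (le_abs_self B) hσ.le
        _ ≤ |B| * (2 * t) := mul_le_mul_of_nonneg_left hσ2 (abs_nonneg B)
    linarith [hLOa_lb σ hσ x]
  have hmem_t : LOa La u t x ∈ {rr : ℝ | ∃ σ : ℝ, t ≤ σ ∧ σ ≤ 2 * t ∧ rr = LOa La u σ x} :=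
    ⟨t, le_refl t, by linarith, rfl⟩
  have hub : LOnew La u t x ≤ u x + t * La x 0 := by
    rw [LOnew]
    exact le_trans (csInf_le ⟨u x - ε/4 - |B| * (2 * t), hS2lb⟩ hmem_t) (hLOa_ub t ht x)
  have hlb : u x - ε/4 - |B| * (2 * t) ≤ LOnew La u t x := by
    rw [LOnew]
    exact le_csInf ⟨_, hmem_t⟩ hS2lb
  rw [abs_sub_lt_iff]
  constructor
  · have hLa0 : La x 0 ≤ C0 := le_trans (le_abs_self _) (hC0 x)
    have h1 : t * La x 0 ≤ t * C0 := mul_le_mul_of_nonneg_left hLa0 ht.le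
    have h2 : t * (C0 + 1) < ε := by
      rw [← lt_div_iff₀ (by positivity)]; exact ht1
    nlinarith
  · have h2 : t * (4 * (|B| + 1)) < ε := by
      rw [← lt_div_iff₀ (by positivity)]; exact ht2
    have h3 : |B| * (2 * t) < ε / 2 := by nlinarith [abs_nonneg B]
    linarith
end
end

section
/- Let ū : ℝ^d → ℝ be continuous and ℤ^d-periodic with T^a_t ū = ū for all t ≥ 0. Then for every continuous ℤ^d-periodic function u : ℝ^d → ℝ and every t ≥ 0, sup_{x ∈ ℝ^d} |T̃^a_t u(x) − ū(x)| ≤ sup_{x ∈ ℝ^d} |T^a_t u(x) − ū(x)|. -/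
open Set Filter

noncomputable section

/-! ### Auxiliary lemmas -/

open MeasureTheory intervalIntegral in
/-- A continuous `ℤ^d`-periodic function is bounded. -/
lemma bounded_of_zdperiodic {d : ℕ} {u : Ed d → ℝ} (hu : Continuous u)
    (hper : IsZdPeriodic u) : ∃ M : ℝ, ∀ x, |u x| ≤ M := by
  set e := EuclideanSpace.equiv (Fin d) ℝ with he
  set K : Set (Fin d → ℝ) := Set.pi univ (fun _ : Fin d => Icc (0:ℝ) 1) with hKdef
  have hK : IsCompact K := isCompact_univ_pi fun _ => isCompact_Icc
  have hS : IsCompact (⇑e ⁻¹' K) := (e.toHomeomorph.isCompact_preimage).mpr hK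
  obtain ⟨C, hC⟩ := hS.exists_bound_of_continuousOn hu.continuousOn
  refine ⟨C, fun x => ?_⟩
  set k : Fin d → ℤ := fun i => ⌊x i⌋ with hk
  set y : Ed d := x - intVec d k with hy
  have hxy : u x = u y := by
    have h2 : y + intVec d k = x := by rw [hy]; abel
    rw [← h2]; exact hper y k
  have hymem : y ∈ ⇑e ⁻¹' K := by
    intro i _
    have : y i = Int.fract (x i) := by
      rw [hy, PiLp.sub_apply]
      exact Int.self_sub_floor (x i)
    show e y i ∈ Icc (0:ℝ) 1
    have hey : e y i = y i := rfl
    rw [hey, this]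
    exact ⟨Int.fract_nonneg _, (Int.fract_lt_one _).le⟩
  have := hC y hymem
  rw [hxy]
  simpa [Real.norm_eq_abs] using this

lemma contDiffOn_singleton_aux {d : ℕ} {γ : ℝ → Ed d} {x : ℝ} :
    ContDiffOn ℝ 1 γ ({x} : Set ℝ) := by
  intro y hy
  obtain rfl : y = x := hy
  exact (contDiffWithinAt_const (c := γ y)).congr
    (fun z hz => by obtain rfl : z = y := hz; rfl) rfl

open MeasureTheory intervalIntegral in
lemma piece_intervalIntegrable {d : ℕ} {La : Ed d → Ed d → ℝ}
    (hC : Continuous fun p : Ed d × Ed d => La p.1 p.2)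
    {γ : ℝ → Ed d} {c e : ℝ} (hce : c ≤ e) (hγ : ContDiffOn ℝ 1 γ (Icc c e)) :
    IntervalIntegrable (fun s => La (γ s) (deriv γ s)) volume c e := by
  rcases eq_or_lt_of_le hce with rfl | hlt
  · exact IntervalIntegrable.refl
  · set g : ℝ → ℝ := fun s => La (γ s) (derivWithin γ (Icc c e) s) with hg
    have hgc : ContinuousOn g (Icc c e) := by
      have h1 : ContinuousOn (fun s => (γ s, derivWithin γ (Icc c e) s)) (Icc c e) :=
        (hγ.continuousOn).prodMk (hγ.continuousOn_derivWithin (uniqueDiffOn_Icc hlt) le_rfl)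
      exact hC.comp_continuousOn h1
    have hgi : IntervalIntegrable g volume c e :=
      ContinuousOn.intervalIntegrable (by rwa [uIcc_of_le hce])
    rw [intervalIntegrable_iff_integrableOn_Ioc_of_le hce] at hgi ⊢
    have heq : EqOn g (fun s => La (γ s) (deriv γ s)) (Ioo c e) := by
      intro s hs
      have hnb : Icc c e ∈ nhds s := Icc_mem_nhds hs.1 hs.2
      show La (γ s) (derivWithin γ (Icc c e) s) = La (γ s) (deriv γ s)
      rw [derivWithin_of_mem_nhds hnb]
    exact ((hgi.mono_set Ioo_subset_Ioc_self).congr_fun heq measurableSet_Ioo).congr_set_ae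
      Ioo_ae_eq_Ioc.symm

open MeasureTheory intervalIntegral in
lemma pc1_intervalIntegrable {d : ℕ} {La : Ed d → Ed d → ℝ}
    (hC : Continuous fun p : Ed d × Ed d => La p.1 p.2)
    {γ : ℝ → Ed d} {a b : ℝ} (h : PiecewiseC1On γ a b) :
    IntervalIntegrable (fun s => La (γ s) (deriv γ s)) volume a b := by
  obtain ⟨-, n, T, hT0, hTl, hmono, hpc⟩ := h
  have key : ∀ i : Fin (n+1),
      IntervalIntegrable (fun s => La (γ s) (deriv γ s)) volume (T 0) (T i) := by
    intro i
    induction i using Fin.induction with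
    | zero => exact IntervalIntegrable.refl
    | succ i ih =>
        exact ih.trans (piece_intervalIntegrable hC
          (hmono (Fin.castSucc_lt_succ : i.castSucc < i.succ).le) (hpc i))
  rw [← hT0, ← hTl]
  exact key (Fin.last n)

open MeasureTheory intervalIntegral in
lemma action_lower {d : ℕ} {La : Ed d → Ed d → ℝ}
    (hC : Continuous fun p : Ed d × Ed d => La p.1 p.2)
    {B : ℝ} (hB : ∀ x v : Ed d, -B ≤ La x v)
    {γ : ℝ → Ed d} {a b : ℝ} (hab : a ≤ b) (h : PiecewiseC1On γ a b) :
    (b - a) * (-B) ≤ actionA La γ a b := by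
  have hi := pc1_intervalIntegrable hC h
  have hmono : ∫ s in a..b, (-B) ≤ ∫ s in a..b, La (γ s) (deriv γ s) :=
    intervalIntegral.integral_mono_on hab intervalIntegrable_const hi (fun x _ => hB _ _)
  have hconst : ∫ s in a..b, (-B) = (b - a) * (-B) := by
    rw [intervalIntegral.integral_const, smul_eq_mul]
  rw [actionA, ← hconst]
  exact hmono

lemma PiecewiseC1On.restrict {d : ℕ} {γ : ℝ → Ed d} {a b t : ℝ}
    (h : PiecewiseC1On γ a b) (hat : a ≤ t) (htb : t ≤ b) : PiecewiseC1On γ a t := by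
  obtain ⟨hcont, n, T, hT0, hTl, hmono, hpc⟩ := h
  refine ⟨hcont.mono (Icc_subset_Icc le_rfl htb), n, fun i => min (T i) t, ?_, ?_, ?_, ?_⟩
  · show min (T 0) t = a
    rw [hT0]; exact min_eq_left hat
  · show min (T (Fin.last n)) t = t
    rw [hTl]; exact min_eq_right htb
  · exact fun i j hij => min_le_min (hmono hij) le_rfl
  · intro i
    show ContDiffOn ℝ 1 γ (Icc (min (T i.castSucc) t) (min (T i.succ) t))
    rcases le_total t (T i.castSucc) with hle | hle
    · have h1 : min (T i.castSucc) t = t := min_eq_right hle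
      have h2 : min (T i.succ) t = t :=
        min_eq_right (hle.trans (hmono (Fin.castSucc_lt_succ : i.castSucc < i.succ).le))
      rw [h1, h2, Icc_self]
      exact contDiffOn_singleton_aux
    · have h1 : min (T i.castSucc) t = T i.castSucc := min_eq_left hle
      rw [h1]
      exact (hpc i).mono (Icc_subset_Icc le_rfl (min_le_left _ _))

lemma PiecewiseC1On.shift {d : ℕ} {γ : ℝ → Ed d} {b t : ℝ}
    (h : PiecewiseC1On γ 0 b) (ht : 0 ≤ t) (htb : t ≤ b) :
    PiecewiseC1On (fun s => γ (s + t)) 0 (b - t) := by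
  obtain ⟨hcont, n, T, hT0, hTl, hmono, hpc⟩ := h
  have hshift : Continuous fun s : ℝ => s + t := continuous_id.add continuous_const
  refine ⟨?_, n, fun i => max (T i) t - t, ?_, ?_, ?_, ?_⟩
  · refine hcont.comp hshift.continuousOn ?_
    intro s hs
    obtain ⟨hs1, hs2⟩ := hs
    show s + t ∈ Icc 0 b
    exact ⟨by linarith, by linarith⟩
  · show max (T 0) t - t = 0
    rw [hT0, max_eq_right ht]; ring
  · show max (T (Fin.last n)) t - t = b - t
    rw [hTl, max_eq_left htb]
  · exact fun i j hij => sub_le_sub_right (max_le_max (hmono hij) le_rfl) t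
  · intro i
    show ContDiffOn ℝ 1 (fun s => γ (s + t))
      (Icc (max (T i.castSucc) t - t) (max (T i.succ) t - t))
    rcases le_total (T i.succ) t with hle | hle
    · have h1 : max (T i.castSucc) t - t = 0 := by
        rw [max_eq_right ((hmono (Fin.castSucc_lt_succ : i.castSucc < i.succ).le).trans hle)]; ring
      have h2 : max (T i.succ) t - t = 0 := by rw [max_eq_right hle]; ring
      rw [h1, h2, Icc_self]
      exact contDiffOn_singleton_aux
    · have hmt : ContDiff ℝ 1 fun s : ℝ => s + t := contDiff_id.add contDiff_const
      have hmaps : MapsTo (fun s : ℝ => s + t)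
          (Icc (max (T i.castSucc) t - t) (max (T i.succ) t - t))
          (Icc (T i.castSucc) (T i.succ)) := by
        intro s hs
        obtain ⟨hs1, hs2⟩ := hs
        rw [max_eq_left hle] at hs2
        have h2 : T i.castSucc ≤ max (T i.castSucc) t := le_max_left _ _
        show s + t ∈ Icc (T i.castSucc) (T i.succ)
        exact ⟨by linarith, by linarith⟩
      exact (hpc i).comp hmt.contDiffOn hmaps

lemma const_pc1 {d : ℕ} (x : Ed d) {τ : ℝ} (hτ : 0 ≤ τ) :
    PiecewiseC1On (fun _ => x) 0 τ := by
  refine ⟨continuousOn_const, 1, ![0, τ], rfl, rfl, ?_, ?_⟩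
  · rw [Fin.monotone_iff_le_succ]
    intro i
    fin_cases i
    simpa using hτ
  · intro i
    fin_cases i
    exact contDiffOn_const

lemma actionA_const {d : ℕ} (La : Ed d → Ed d → ℝ) (x : Ed d) (τ : ℝ) :
    actionA La (fun _ => x) 0 τ = τ * La x 0 := by
  simp [actionA, deriv_const']

open MeasureTheory intervalIntegral in
lemma LOa_set_lower {d : ℕ} {La : Ed d → Ed d → ℝ}
    (hC : Continuous fun p : Ed d × Ed d => La p.1 p.2)
    {w : Ed d → ℝ} {M B : ℝ} (hM : ∀ x, |w x| ≤ M) (hB : ∀ x v : Ed d, -B ≤ La x v)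
    {τ : ℝ} (hτ : 0 ≤ τ) (x : Ed d) :
    ∀ r ∈ {r | ∃ γ : ℝ → Ed d, PiecewiseC1On γ 0 τ ∧ γ τ = x ∧
      r = w (γ 0) + actionA La γ 0 τ}, -M + (τ - 0) * (-B) ≤ r := by
  rintro r ⟨γ, hγ, -, rfl⟩
  have h1 := action_lower hC hB hτ hγ
  have h2 := (abs_le.1 (hM (γ 0))).1
  linarith

open MeasureTheory intervalIntegral in
lemma LOa_le_curve {d : ℕ} {La : Ed d → Ed d → ℝ}
    (hC : Continuous fun p : Ed d × Ed d => La p.1 p.2)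
    {w : Ed d → ℝ} {M B : ℝ} (hM : ∀ x, |w x| ≤ M) (hB : ∀ x v : Ed d, -B ≤ La x v)
    {τ : ℝ} (hτ : 0 < τ) {x : Ed d} {γ : ℝ → Ed d}
    (hγ : PiecewiseC1On γ 0 τ) (hend : γ τ = x) :
    LOa La w τ x ≤ w (γ 0) + actionA La γ 0 τ := by
  rw [LOa, if_neg hτ.ne']
  exact csInf_le ⟨-M + (τ - 0) * (-B), LOa_set_lower hC hM hB hτ.le x⟩ ⟨γ, hγ, hend, rfl⟩

/-- if `ū` is a fixed point of the Lax–Oleinik semigroup, then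
`‖T̃ᵃ_t u − ū‖_∞ ≤ ‖Tᵃ_t u − ū‖_∞` for all `t ≥ 0`: the new semigroup converges faster. -/
theorem LOnew_faster
    {d : ℕ} (hd : 1 ≤ d) (La : Ed d → Ed d → ℝ) (hLa : TonelliAut La)
    (u : Ed d → ℝ) (hu : Continuous u) (huper : IsZdPeriodic u)
    (ubar : Ed d → ℝ) (hubarc : Continuous ubar) (hubarper : IsZdPeriodic ubar)
    (hfix : ∀ t : ℝ, 0 ≤ t → ∀ x : Ed d, LOa La ubar t x = ubar x) :
    ∀ t : ℝ, 0 ≤ t → ∀ x : Ed d,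
      |LOnew La u t x - ubar x| ≤ ⨆ y : Ed d, |LOa La u t y - ubar y| := by
  classical
  obtain ⟨hC2, hper, -, hsl⟩ := hLa
  have hC : Continuous fun p : Ed d × Ed d => La p.1 p.2 := hC2.continuous
  obtain ⟨B, hB0⟩ := hsl 0 le_rfl
  have hB : ∀ x v : Ed d, -B ≤ La x v := fun x v => by simpa using hB0 x v
  obtain ⟨Mu, hMu⟩ := bounded_of_zdperiodic hu huper
  obtain ⟨Mb, hMb⟩ := bounded_of_zdperiodic hubarc hubarper
  have hL0c : Continuous (fun x : Ed d => La x 0) :=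
    hC.comp (continuous_id.prodMk continuous_const)
  have hL0per : IsZdPeriodic (fun x : Ed d => La x 0) := fun x k => hper x 0 k
  obtain ⟨ML, hML⟩ := bounded_of_zdperiodic hL0c hL0per
  intro t ht x
  rcases eq_or_lt_of_le ht with rfl | htpos
  · -- case t = 0
    have hset : {r | ∃ σ : ℝ, (0:ℝ) ≤ σ ∧ σ ≤ 2 * 0 ∧ r = LOa La u σ x} = {u x} := by
      ext r
      simp only [mem_setOf_eq, mem_singleton_iff]
      constructor
      · rintro ⟨σ, h1, h2, rfl⟩
        have hσ0 : σ = 0 := le_antisymm (by linarith) h1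
        simp [hσ0, LOa]
      · rintro rfl
        exact ⟨0, le_rfl, by norm_num, by simp [LOa]⟩
    rw [LOnew, hset, csInf_singleton]
    have hbdd : BddAbove (range fun y => |LOa La u 0 y - ubar y|) := by
      refine ⟨Mu + Mb, ?_⟩
      rintro r ⟨y, rfl⟩
      have h1 := abs_le.1 (hMu y)
      have h2 := abs_le.1 (hMb y)
      show |LOa La u 0 y - ubar y| ≤ Mu + Mb
      rw [LOa, if_pos rfl, abs_le]
      constructor <;> linarith
    have := le_ciSup hbdd x
    simpa [LOa] using this
  · -- case t > 0
    have hσbig : ∀ σ : ℝ, t ≤ σ → 0 < σ := fun σ hσ => lt_of_lt_of_le htpos hσ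
    -- bound on |LOa u t y - ubar y| uniform in y
    have hML0 : 0 ≤ ML := (abs_nonneg _).trans (hML 0)
    have hMLB : -B ≤ ML := (hB 0 0).trans ((le_abs_self _).trans (hML 0))
    have hbddA : BddAbove (range fun y => |LOa La u t y - ubar y|) := by
      refine ⟨Mu + Mb + 2 * (t * ML) + t * B, ?_⟩
      rintro r ⟨y, rfl⟩
      show |LOa La u t y - ubar y| ≤ Mu + Mb + 2 * (t * ML) + t * B
      have hlow : -Mu + (t - 0) * (-B) ≤ LOa La u t y := by
        rw [LOa, if_neg htpos.ne']
        refine le_csInf ⟨u y + actionA La (fun _ => y) 0 t,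
          ⟨fun _ => y, const_pc1 y ht, rfl, rfl⟩⟩ (LOa_set_lower hC hMu hB ht y)
      have hlow' : -Mu - t * B ≤ LOa La u t y := by
        have : (t - 0) * (-B) = -(t * B) := by ring
        rw [this] at hlow; linarith
      have hup : LOa La u t y ≤ u y + actionA La (fun _ => y) 0 t :=
        LOa_le_curve hC hMu hB htpos (const_pc1 y ht) rfl
      rw [actionA_const] at hup
      have h1 := abs_le.1 (hMu y)
      have h2 := abs_le.1 (hMb y)
      have h3 := abs_le.1 (hML y)
      have h4 : t * La y 0 ≤ t * ML := mul_le_mul_of_nonneg_left h3.2 ht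
      have hp1 : 0 ≤ t * ML + t * B := by
        have := mul_nonneg ht (show (0:ℝ) ≤ ML + B by linarith)
        rw [mul_add] at this; exact this
      have hp2 : 0 ≤ t * ML := mul_nonneg ht hML0
      rw [abs_le]
      constructor <;> linarith
    have hcle : ∀ y, |LOa La u t y - ubar y| ≤ ⨆ y : Ed d, |LOa La u t y - ubar y| :=
      fun y => le_ciSup hbddA y
    -- the key pointwise estimate for each σ ≥ t
    have key : ∀ σ : ℝ, t ≤ σ →
        ubar x - (⨆ y : Ed d, |LOa La u t y - ubar y|) ≤ LOa La u σ x := by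
      intro σ hσ
      have hσpos : 0 < σ := hσbig σ hσ
      rw [LOa, if_neg hσpos.ne']
      refine le_csInf ⟨u x + actionA La (fun _ => x) 0 σ,
        ⟨fun _ => x, const_pc1 x hσpos.le, rfl, rfl⟩⟩ ?_
      rintro r ⟨γ, hγ, hend, rfl⟩
      have hint : IntervalIntegrable (fun s => La (γ s) (deriv γ s)) MeasureTheory.volume 0 σ :=
        pc1_intervalIntegrable hC hγ
      have hint1 : IntervalIntegrable (fun s => La (γ s) (deriv γ s)) MeasureTheory.volume 0 t :=
        hint.mono_set (by rw [uIcc_of_le ht, uIcc_of_le hσpos.le]; exact Icc_subset_Icc le_rfl hσ)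
      have hint2 : IntervalIntegrable (fun s => La (γ s) (deriv γ s)) MeasureTheory.volume t σ :=
        hint.mono_set (by rw [uIcc_of_le hσ, uIcc_of_le hσpos.le]; exact Icc_subset_Icc ht le_rfl)
      have hsplit : actionA La γ 0 σ =
          (∫ s in (0:ℝ)..t, La (γ s) (deriv γ s)) + ∫ s in t..σ, La (γ s) (deriv γ s) :=
        (intervalIntegral.integral_add_adjacent_intervals hint1 hint2).symm
      -- step 1: u (γ 0) + ∫_0^t ≥ ubar (γ t) - c
      have hc1 : ubar (γ t) - (⨆ y : Ed d, |LOa La u t y - ubar y|) ≤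
          u (γ 0) + ∫ s in (0:ℝ)..t, La (γ s) (deriv γ s) := by
        have hres : PiecewiseC1On γ 0 t := hγ.restrict ht hσ
        have h1 : LOa La u t (γ t) ≤ u (γ 0) + actionA La γ 0 t :=
          LOa_le_curve hC hMu hB htpos hres rfl
        have h2 := (abs_le.1 (hcle (γ t))).1
        have h3 : actionA La γ 0 t = ∫ s in (0:ℝ)..t, La (γ s) (deriv γ s) := rfl
        rw [h3] at h1
        linarith
      -- step 2: ubar (γ t) + ∫_t^σ ≥ ubar x
      have hc2 : ubar x - ubar (γ t) ≤ ∫ s in t..σ, La (γ s) (deriv γ s) := by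
        rcases eq_or_lt_of_le hσ with rfl | hlt
        · rw [← hend]
          simp
        · have hδ : PiecewiseC1On (fun s => γ (s + t)) 0 (σ - t) := hγ.shift ht hσ
          have hδτ : (0:ℝ) < σ - t := by linarith
          have hδend : (fun s => γ (s + t)) (σ - t) = x := by
            show γ (σ - t + t) = x
            rw [sub_add_cancel]; exact hend
          have h1 : LOa La ubar (σ - t) x ≤
              ubar ((fun s => γ (s + t)) 0) + actionA La (fun s => γ (s + t)) 0 (σ - t) :=
            LOa_le_curve hC hMb hB hδτ hδ hδend
          rw [hfix (σ - t) hδτ.le x] at h1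
          have h2 : actionA La (fun s => γ (s + t)) 0 (σ - t) =
              ∫ s in t..σ, La (γ s) (deriv γ s) := by
            rw [actionA]
            have heq : EqOn (fun s => La (γ (s + t)) (deriv (fun s' => γ (s' + t)) s))
                (fun s => La (γ (s + t)) (deriv γ (s + t))) (uIcc 0 (σ - t)) := by
              intro s _
              simp only
              rw [deriv_comp_add_const]
            rw [intervalIntegral.integral_congr heq,
              intervalIntegral.integral_comp_add_right (fun s => La (γ s) (deriv γ s)) t,
              zero_add, sub_add_cancel]
          rw [h2] at h1
          have h3 : (fun s => γ (s + t)) 0 = γ t := by show γ (0 + t) = γ t; rw [zero_add]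
          rw [h3] at h1
          linarith
      rw [hsplit]
      linarith
    -- conclude
    have hne : {r | ∃ σ : ℝ, t ≤ σ ∧ σ ≤ 2 * t ∧ r = LOa La u σ x}.Nonempty :=
      ⟨LOa La u t x, t, le_rfl, by linarith, rfl⟩
    have hlow : ubar x - (⨆ y : Ed d, |LOa La u t y - ubar y|) ≤ LOnew La u t x := by
      rw [LOnew]
      refine le_csInf hne ?_
      rintro r ⟨σ, h1, -, rfl⟩
      exact key σ h1
    have hup : LOnew La u t x ≤ LOa La u t x := by
      rw [LOnew]
      refine csInf_le ⟨ubar x - (⨆ y : Ed d, |LOa La u t y - ubar y|), ?_⟩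
        ⟨t, le_rfl, by linarith, rfl⟩
      rintro r ⟨σ, h1, -, rfl⟩
      exact key σ h1
    have h3 := abs_le.1 (hcle x)
    rw [abs_le]
    exact ⟨by linarith, by linarith [h3.2]⟩
end
end

section
/- Let u : ℝ^d → ℝ be continuous and ℤ^d-periodic, and suppose that T^a_t u converges uniformly on ℝ^d as t → +∞ (to some continuous function). Then u is a fixed point of the new Lax–Oleinik semigroup (T̃^a_t u = u for all t ≥ 0) if and only if u is a fixed point of the Lax–Oleinik semigroup (T^a_t u = u for all t ≥ 0). -/
open Set Filter

noncomputable section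

section Aux

open MeasureTheory intervalIntegral

/-- The constant curve is piecewise `C¹`. -/
lemma piecewiseC1On_const {d : ℕ} (x : Ed d) {t : ℝ} (ht : 0 ≤ t) :
    PiecewiseC1On (fun _ => x) 0 t := by
  refine ⟨continuousOn_const, 1, ![0, t], rfl, rfl, ?_, fun i => contDiffOn_const⟩
  intro i j hij
  fin_cases i <;> fin_cases j <;> simp_all [Fin.le_def]

/-- The Lagrangian integrand along a piecewise `C¹` curve is interval integrable. -/
lemma tonelli_integrable {d : ℕ} {La : Ed d → Ed d → ℝ}
    (hLaC : Continuous (fun p : Ed d × Ed d => La p.1 p.2))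
    {γ : ℝ → Ed d} {a b : ℝ} (hγ : PiecewiseC1On γ a b) :
    IntervalIntegrable (fun s => La (γ s) (deriv γ s)) volume a b := by
  obtain ⟨-, n, T, hT0, hTl, hmono, hp⟩ := hγ
  have key : ∀ i : Fin (n + 1),
      IntervalIntegrable (fun s => La (γ s) (deriv γ s)) volume (T 0) (T i) := by
    intro i
    induction i using Fin.induction with
    | zero => exact IntervalIntegrable.refl
    | succ i ih =>
      refine ih.trans ?_
      have hpq : T i.castSucc ≤ T i.succ := hmono (Fin.castSucc_le_succ i)
      rcases eq_or_lt_of_le hpq with h | h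
      · rw [h]
        try exact IntervalIntegrable.refl
      · have hC := hp i
        have hU : UniqueDiffOn ℝ (Set.Icc (T i.castSucc) (T i.succ)) := uniqueDiffOn_Icc h
        have hg : ContinuousOn (derivWithin γ (Set.Icc (T i.castSucc) (T i.succ)))
            (Set.Icc (T i.castSucc) (T i.succ)) := hC.continuousOn_derivWithin hU le_rfl
        have hcont : ContinuousOn
            (fun s => La (γ s) (derivWithin γ (Set.Icc (T i.castSucc) (T i.succ)) s))
            (Set.Icc (T i.castSucc) (T i.succ)) :=
          by have := hLaC.comp_continuousOn (hC.continuousOn.prodMk hg); exact this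
        have hInt : IntegrableOn
            (fun s => La (γ s) (derivWithin γ (Set.Icc (T i.castSucc) (T i.succ)) s))
            (Set.Icc (T i.castSucc) (T i.succ)) := hcont.integrableOn_Icc
        have heq : Set.EqOn
            (fun s => La (γ s) (derivWithin γ (Set.Icc (T i.castSucc) (T i.succ)) s))
            (fun s => La (γ s) (deriv γ s)) (Set.Ioo (T i.castSucc) (T i.succ)) := by
          intro s hs
          have hnhds : Set.Icc (T i.castSucc) (T i.succ) ∈ nhds s := Icc_mem_nhds hs.1 hs.2
          simp only [derivWithin_of_mem_nhds hnhds]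
        have hIoo : IntegrableOn (fun s => La (γ s) (deriv γ s))
            (Set.Ioo (T i.castSucc) (T i.succ)) :=
          (hInt.mono_set Set.Ioo_subset_Icc_self).congr_fun heq measurableSet_Ioo
        have hIoc : IntegrableOn (fun s => La (γ s) (deriv γ s))
            (Set.Ioc (T i.castSucc) (T i.succ)) :=
          hIoo.congr_set_ae Ioo_ae_eq_Ioc.symm
        exact ⟨hIoc, by rw [Set.Ioc_eq_empty (not_lt.2 hpq)]; exact integrableOn_empty⟩
  have h := key (Fin.last n)
  rwa [hT0, hTl] at h

/-- A continuous `ℤ^d`-periodic function is bounded below. -/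
lemma zd_periodic_bddBelow {d : ℕ} {u : Ed d → ℝ} (hu : Continuous u)
    (huper : IsZdPeriodic u) : ∃ m : ℝ, ∀ x, m ≤ u x := by
  obtain ⟨z, hz, hmin⟩ := (isCompact_closedBall (0 : Ed d) (d + 1)).exists_isMinOn
      ⟨0, Metric.mem_closedBall_self (by positivity)⟩ hu.continuousOn
  refine ⟨u z, fun x => ?_⟩
  set k : Fin d → ℤ := fun i => ⌊x i⌋ with hk
  have hx : u x = u (x - intVec d k) := by
    have h := huper (x - intVec d k) k
    rwa [sub_add_cancel] at h
  rw [hx]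
  refine hmin ?_
  rw [Metric.mem_closedBall, dist_zero_right]
  have h1 : ∀ i, ‖(x - intVec d k) i‖ ^ 2 ≤ 1 := by
    intro i
    have hco : (x - intVec d k) i = x i - (⌊x i⌋ : ℝ) := by simp [intVec, hk]
    rw [hco, Real.norm_eq_abs, sq_abs]
    nlinarith [Int.floor_le (x i), Int.sub_one_lt_floor (x i)]
  calc ‖x - intVec d k‖ = √(∑ i, ‖(x - intVec d k) i‖ ^ 2) := EuclideanSpace.norm_eq _
    _ ≤ √(∑ _i : Fin d, (1 : ℝ)) := by
        apply Real.sqrt_le_sqrt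
        exact Finset.sum_le_sum fun i _ => h1 i
    _ = √(d : ℝ) := by simp
    _ ≤ √(((d : ℝ) + 1) ^ 2) := by
        apply Real.sqrt_le_sqrt
        nlinarith [Nat.cast_nonneg (α := ℝ) d]
    _ = (d : ℝ) + 1 := Real.sqrt_sq (by positivity)

/-- Restriction of a piecewise `C¹` curve. -/
lemma piecewiseC1On_restrict {d : ℕ} {γ : ℝ → Ed d} {σ c : ℝ}
    (hγ : PiecewiseC1On γ 0 σ) (hc : 0 ≤ c) (hcσ : c ≤ σ) :
    PiecewiseC1On γ 0 c := by
  obtain ⟨hcont, n, T, hT0, hTl, hmono, hp⟩ := hγ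
  refine ⟨hcont.mono (Set.Icc_subset_Icc le_rfl hcσ), n, fun i => min (T i) c, ?_, ?_, ?_, ?_⟩
  · show min (T 0) c = 0
    rw [hT0]; exact min_eq_left hc
  · show min (T (Fin.last n)) c = c
    rw [hTl]; exact min_eq_right hcσ
  · intro i j hij
    show min (T i) c ≤ min (T j) c
    exact min_le_min (hmono hij) le_rfl
  · intro i
    show ContDiffOn ℝ 1 γ (Set.Icc (min (T i.castSucc) c) (min (T i.succ) c))
    by_cases hac : T i.castSucc ≤ c
    · refine (hp i).mono fun s hs => ?_
      refine ⟨?_, hs.2.trans (min_le_left _ _)⟩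
      rw [min_eq_left hac] at hs
      exact hs.1
    · push_neg at hac
      have hle : c ≤ T i.succ := hac.le.trans (hmono (Fin.castSucc_le_succ i))
      rw [min_eq_right hac.le, min_eq_right hle, Set.Icc_self]
      exact contDiffOn_const.congr fun y hy => by
        rw [Set.mem_singleton_iff] at hy; rw [hy]

/-- Shift of a piecewise `C¹` curve. -/
lemma piecewiseC1On_shift {d : ℕ} {γ : ℝ → Ed d} {σ c : ℝ}
    (hγ : PiecewiseC1On γ 0 σ) (hc : 0 ≤ c) (hcσ : c ≤ σ) :
    PiecewiseC1On (fun s => γ (s + c)) 0 (σ - c) := by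
  obtain ⟨hcont, n, T, hT0, hTl, hmono, hp⟩ := hγ
  have hplus : ContDiff ℝ 1 (fun s : ℝ => s + c) := contDiff_id.add contDiff_const
  refine ⟨?_, n, fun i => max (T i) c - c, ?_, ?_, ?_, ?_⟩
  · refine hcont.comp hplus.continuous.continuousOn fun s hs => ?_
    have h1 : (0:ℝ) ≤ s := hs.1
    have h2 : s ≤ σ - c := hs.2
    exact ⟨by linarith, by linarith⟩
  · show max (T 0) c - c = 0
    rw [hT0, max_eq_right hc, sub_self]
  · show max (T (Fin.last n)) c - c = σ - c
    rw [hTl, max_eq_left hcσ]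
  · intro i j hij
    show max (T i) c - c ≤ max (T j) c - c
    have h := max_le_max (hmono hij) (le_refl c)
    linarith
  · intro i
    show ContDiffOn ℝ 1 (fun s => γ (s + c))
      (Set.Icc (max (T i.castSucc) c - c) (max (T i.succ) c - c))
    by_cases hbc : c ≤ T i.succ
    · have hmaps : Set.MapsTo (fun s : ℝ => s + c)
          (Set.Icc (max (T i.castSucc) c - c) (max (T i.succ) c - c))
          (Set.Icc (T i.castSucc) (T i.succ)) := by
        intro s hs
        have h1 : max (T i.castSucc) c - c ≤ s := hs.1
        have h2 : s ≤ max (T i.succ) c - c := hs.2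
        rw [max_eq_left hbc] at h2
        have h3 : T i.castSucc ≤ max (T i.castSucc) c := le_max_left _ _
        refine ⟨?_, ?_⟩
        · show T i.castSucc ≤ s + c
          linarith
        · show s + c ≤ T i.succ
          linarith
      exact (hp i).comp hplus.contDiffOn hmaps
    · push_neg at hbc
      rw [max_eq_right ((hmono (Fin.castSucc_le_succ i)).trans hbc.le),
        max_eq_right hbc.le, sub_self, Set.Icc_self]
      exact contDiffOn_const.congr fun y hy => by
        rw [Set.mem_singleton_iff] at hy; rw [hy]

end Aux

/-- assuming `Tᵃ_t u` converges uniformly as `t → +∞`, `u` is a fixed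
point of the new Lax–Oleinik semigroup iff it is a fixed point of the Lax–Oleinik
semigroup. -/
theorem LOnew_fixed_iff_LOa_fixed
    {d : ℕ} (hd : 1 ≤ d) (La : Ed d → Ed d → ℝ) (hLa : TonelliAut La)
    (u : Ed d → ℝ) (hu : Continuous u) (huper : IsZdPeriodic u)
    (hconv : ∃ ubar : Ed d → ℝ, Continuous ubar ∧
      TendstoUniformly (fun (t : ℝ) (x : Ed d) => LOa La u t x) ubar Filter.atTop) :
    (∀ t : ℝ, 0 ≤ t → ∀ x : Ed d, LOnew La u t x = u x) ↔
    (∀ t : ℝ, 0 ≤ t → ∀ x : Ed d, LOa La u t x = u x) := by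
  obtain ⟨hLaC2, hper, hpos, hsuper⟩ := hLa
  have hLaC : Continuous (fun p : Ed d × Ed d => La p.1 p.2) := hLaC2.continuous
  obtain ⟨m, hm⟩ := zd_periodic_bddBelow hu huper
  obtain ⟨B0, hB0⟩ := hsuper 0 le_rfl
  set B : ℝ := max B0 0 with hBdef
  have hB : ∀ x v : Ed d, -B ≤ La x v := fun x v =>
    le_trans (neg_le_neg (le_max_left _ _)) (by simpa using hB0 x v)
  have hB0' : 0 ≤ B := le_max_right _ _
  have elem_lb : ∀ {t : ℝ}, 0 ≤ t → ∀ {x : Ed d} {r : ℝ},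
      (∃ γ : ℝ → Ed d, PiecewiseC1On γ 0 t ∧ γ t = x ∧ r = u (γ 0) + actionA La γ 0 t) →
      m - B * t ≤ r := by
    rintro t ht x r ⟨γ, hγ, -, rfl⟩
    have hint := tonelli_integrable hLaC hγ
    have hc : IntervalIntegrable (fun _ : ℝ => -B) MeasureTheory.volume 0 t :=
      intervalIntegrable_const
    have hmono' := intervalIntegral.integral_mono_on ht hc hint
      (fun s _ => hB (γ s) (deriv γ s))
    rw [intervalIntegral.integral_const, smul_eq_mul] at hmono'
    have hring : (t - 0) * -B = -(B * t) := by ring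
    unfold actionA
    have hmu := hm (γ 0)
    linarith
  have ne_S : ∀ {t : ℝ}, 0 ≤ t → ∀ x : Ed d,
      {r : ℝ | ∃ γ : ℝ → Ed d, PiecewiseC1On γ 0 t ∧ γ t = x ∧
        r = u (γ 0) + actionA La γ 0 t}.Nonempty := fun {t} ht x =>
    ⟨_, fun _ => x, piecewiseC1On_const x ht, rfl, rfl⟩
  have bdd_S : ∀ {t : ℝ}, 0 ≤ t → ∀ x : Ed d,
      BddBelow {r : ℝ | ∃ γ : ℝ → Ed d, PiecewiseC1On γ 0 t ∧ γ t = x ∧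
        r = u (γ 0) + actionA La γ 0 t} :=
    fun {t} ht x => ⟨m - B * t, fun r hr => elem_lb ht hr⟩
  have LOa_lb : ∀ {t : ℝ}, 0 ≤ t → ∀ x : Ed d, m - B * t ≤ LOa La u t x := by
    intro t ht x
    rcases eq_or_lt_of_le ht with h | h
    · unfold LOa
      rw [if_pos h.symm]
      nlinarith [hm x]
    · unfold LOa
      rw [if_neg h.ne']
      exact le_csInf (ne_S ht x) fun r hr => elem_lb ht hr
  constructor
  · -- hard direction
    intro hnew
    have step1 : ∀ t : ℝ, 0 ≤ t → ∀ x : Ed d, u x ≤ LOa La u t x := by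
      intro t ht x
      rcases eq_or_lt_of_le ht with h | h
      · unfold LOa
        rw [if_pos h.symm]
      · have h2 := hnew t ht x
        unfold LOnew at h2
        rw [← h2]
        refine csInf_le ⟨m - B * (2 * t), ?_⟩ ⟨t, le_rfl, by linarith, rfl⟩
        rintro r ⟨σ, hσ1, hσ2, rfl⟩
        have hσ : (0:ℝ) ≤ σ := ht.trans hσ1
        have hlb := LOa_lb hσ x
        nlinarith
    have mono : ∀ t σ : ℝ, 0 ≤ t → t ≤ σ → ∀ x : Ed d,
        LOa La u t x ≤ LOa La u σ x := by
      intro t σ ht htσ x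
      rcases eq_or_lt_of_le ht with h | htpos
      · conv_lhs => rw [LOa]
        rw [if_pos h.symm]
        exact step1 σ (ht.trans htσ) x
      rcases eq_or_lt_of_le htσ with h | hlt
      · rw [h]
      have hσpos : 0 < σ := htpos.trans hlt
      have hcpos : 0 < σ - t := by linarith
      have hcσ : σ - t ≤ σ := by linarith
      conv_rhs => rw [LOa]
      rw [if_neg hσpos.ne']
      refine le_csInf (ne_S hσpos.le x) ?_
      rintro r ⟨γ, hγ, hend, rfl⟩
      have hint : IntervalIntegrable (fun s => La (γ s) (deriv γ s))
          MeasureTheory.volume 0 σ := tonelli_integrable hLaC hγ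
      have hint1 : IntervalIntegrable (fun s => La (γ s) (deriv γ s))
          MeasureTheory.volume 0 (σ - t) := hint.mono_set (by
        rw [Set.uIcc_of_le hcpos.le, Set.uIcc_of_le hσpos.le]
        exact Set.Icc_subset_Icc le_rfl hcσ)
      have hint2 : IntervalIntegrable (fun s => La (γ s) (deriv γ s))
          MeasureTheory.volume (σ - t) σ := hint.mono_set (by
        rw [Set.uIcc_of_le hcσ, Set.uIcc_of_le hσpos.le]
        exact Set.Icc_subset_Icc hcpos.le le_rfl)
      have hsplit : actionA La γ 0 σ =
          (∫ s in (0:ℝ)..(σ - t), La (γ s) (deriv γ s)) +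
          ∫ s in (σ - t)..σ, La (γ s) (deriv γ s) :=
        (intervalIntegral.integral_add_adjacent_intervals hint1 hint2).symm
      have h1 : u (γ (σ - t)) ≤ u (γ 0) + ∫ s in (0:ℝ)..(σ - t), La (γ s) (deriv γ s) := by
        have hmem : u (γ 0) + actionA La γ 0 (σ - t) ∈
            {r : ℝ | ∃ γ' : ℝ → Ed d, PiecewiseC1On γ' 0 (σ - t) ∧ γ' (σ - t) = γ (σ - t) ∧
              r = u (γ' 0) + actionA La γ' 0 (σ - t)} :=
          ⟨γ, piecewiseC1On_restrict hγ hcpos.le hcσ, rfl, rfl⟩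
        have hle := csInf_le (bdd_S hcpos.le (γ (σ - t))) hmem
        have h2 := step1 (σ - t) hcpos.le (γ (σ - t))
        unfold LOa at h2
        rw [if_neg hcpos.ne'] at h2
        exact h2.trans hle
      have h2 : LOa La u t x ≤ u (γ (σ - t)) + ∫ s in (σ - t)..σ, La (γ s) (deriv γ s) := by
        have hδ : PiecewiseC1On (fun s => γ (s + (σ - t))) 0 t := by
          have hs := piecewiseC1On_shift hγ hcpos.le hcσ
          rwa [show σ - (σ - t) = t from by ring] at hs
        have hδend : (fun s => γ (s + (σ - t))) t = x := by
          show γ (t + (σ - t)) = x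
          rw [show t + (σ - t) = σ from by ring]
          exact hend
        have hδint : actionA La (fun s => γ (s + (σ - t))) 0 t =
            ∫ s in (σ - t)..σ, La (γ s) (deriv γ s) := by
          have e1 : actionA La (fun s => γ (s + (σ - t))) 0 t =
              ∫ s in (0:ℝ)..t, (fun s' => La (γ s') (deriv γ s')) (s + (σ - t)) := by
            unfold actionA
            apply intervalIntegral.integral_congr
            intro s _
            simp only [deriv_comp_add_const]
          rw [e1, intervalIntegral.integral_comp_add_right
            (fun s' => La (γ s') (deriv γ s')) (σ - t), zero_add,
            show t + (σ - t) = σ from by ring]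
        have hmem : u ((fun s => γ (s + (σ - t))) 0) + actionA La (fun s => γ (s + (σ - t))) 0 t ∈
            {r : ℝ | ∃ γ' : ℝ → Ed d, PiecewiseC1On γ' 0 t ∧ γ' t = x ∧
              r = u (γ' 0) + actionA La γ' 0 t} :=
          ⟨fun s => γ (s + (σ - t)), hδ, hδend, rfl⟩
        have hle := csInf_le (bdd_S htpos.le x) hmem
        conv_lhs => rw [LOa]
        rw [if_neg htpos.ne']
        refine hle.trans ?_
        rw [hδint]
        have hδ0 : (fun s => γ (s + (σ - t))) 0 = γ (σ - t) := by
          show γ (0 + (σ - t)) = γ (σ - t)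
          rw [zero_add]
        rw [hδ0]
      calc LOa La u t x ≤ u (γ (σ - t)) + ∫ s in (σ - t)..σ, La (γ s) (deriv γ s) := h2
        _ ≤ (u (γ 0) + ∫ s in (0:ℝ)..(σ - t), La (γ s) (deriv γ s)) +
            ∫ s in (σ - t)..σ, La (γ s) (deriv γ s) := by linarith
        _ = u (γ 0) + actionA La γ 0 σ := by rw [hsplit]; ring
    intro t ht x
    refine le_antisymm ?_ (step1 t ht x)
    have h2 := hnew t ht x
    unfold LOnew at h2
    rw [← h2]
    refine le_csInf ⟨LOa La u t x, t, le_rfl, by linarith, rfl⟩ ?_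
    rintro r ⟨σ, hσ1, -, rfl⟩
    exact mono t σ ht hσ1 x
  · -- easy direction
    intro hfix t ht x
    unfold LOnew
    have hset : {r : ℝ | ∃ σ : ℝ, t ≤ σ ∧ σ ≤ 2 * t ∧ r = LOa La u σ x} = {u x} := by
      ext r
      simp only [Set.mem_setOf_eq, Set.mem_singleton_iff]
      constructor
      · rintro ⟨σ, h1, h2, rfl⟩
        exact hfix σ (ht.trans h1) x
      · rintro rfl
        exact ⟨t, le_rfl, by linarith, (hfix t ht x).symm⟩
    rw [hset, csInf_singleton]
end
end
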